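/- arXiv:0904.2129 — 2 statements merged into one kernel-verified Lean document; each statement's English description precedes it below -/
import Mathlib

section
/- Let G be an outerplanar st-digraph with vertex set V^l ∪ V^r ∪ {s,t}, where V^l and V^r are the vertices on the left and right sides of the outer boundary. Any acyclic HP-completion set of G induces a hamiltonian path that visits the vertices of V^l in the order in which they appear along the left side of G, and likewise visits the vertices of V^r in the order they appear along the right side. -/
/-- A directed hamiltonian path of the relation `E`, visiting every vertex exactly once. -/
def IsHamPathOf {V : Type} (E : V → V → Prop) (l : List V) : Prop :=
  l.Nodup ∧ (∀ v : V, v ∈ l) ∧ l.Chain' E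

/-- A directed hamiltonian path of the vertices of `W`. -/
def IsHamPathOn {V : Type} (E : V → V → Prop) (W : Set V) (l : List V) : Prop :=
  l.Nodup ∧ (∀ v : V, v ∈ l ↔ v ∈ W) ∧ l.Chain' E

/-- The relation `E` is acyclic (no directed cycles). -/
def AcyclicRel {V : Type} (E : V → V → Prop) : Prop :=
  ∀ v : V, ¬ Relation.TransGen E v v

/-- `x` lies strictly inside the cyclic arc from `a` to `b` (going forwards) on a cycle
of length `n`. -/
def inCycArc (n a b x : ℕ) : Prop :=
  (x + n - a) % n < (b + n - a) % n ∧ (x + n - a) % n ≠ 0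

/-- Two chords of the cycle (given by the cyclically ordered list `c` of the vertices of the
outer face) cross each other: their endpoints are distinct and they interleave on the cycle. -/
def chordsCrossIn {V : Type} [DecidableEq V] (c : List V) (e f : V × V) : Prop :=
  e.1 ≠ f.1 ∧ e.1 ≠ f.2 ∧ e.2 ≠ f.1 ∧ e.2 ≠ f.2 ∧
  Xor' (inCycArc c.length (c.idxOf e.1) (c.idxOf e.2) (c.idxOf f.1))
       (inCycArc c.length (c.idxOf e.1) (c.idxOf e.2) (c.idxOf f.2))

/-- An outerplanar st-digraph: an acyclic digraph with unique source `s` and unique sink `t`,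
embedded with all vertices on the outer face; `leftV` (resp. `rightV`) is the list of interior
vertices of the left (resp. right) side of the outer boundary, ordered from `s` to `t`,
each side being a directed path from `s` to `t`.  All edges are chords of the outer cycle
and, by planarity of the embedding, no two edges cross. -/
structure OuterStDigraph (V : Type) [Fintype V] [DecidableEq V] where
  E : V → V → Prop
  s : V
  t : V
  leftV : List V
  rightV : List V
  cover : ∀ v : V, v ∈ (s :: leftV) ++ (t :: rightV)
  nodup : ((s :: leftV) ++ (t :: rightV)).Nodup
  left_path : ((s :: leftV) ++ [t]).Chain' E
  right_path : ((s :: rightV) ++ [t]).Chain' E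
  acyclic : AcyclicRel E
  source_unique : ∀ v, (∀ u, ¬ E u v) → v = s
  sink_unique : ∀ v, (∀ u, ¬ E v u) → v = t
  no_loops : ∀ u v, E u v → u ≠ v
  planarity : ∀ a b c d, E a b → E c d →
    ¬ chordsCrossIn ((s :: leftV) ++ (t :: rightV.reverse)) (a, b) (c, d)

namespace OuterStDigraph

variable {V : Type} [Fintype V] [DecidableEq V]

/-- The outer cycle of the embedding, listed in cyclic order. -/
def cyc (G : OuterStDigraph V) : List V := (G.s :: G.leftV) ++ (G.t :: G.rightV.reverse)

/-- Two (possibly added) edges, drawn as chords of the outer cycle, cross each other. -/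
def Cross (G : OuterStDigraph V) (e f : V × V) : Prop := chordsCrossIn G.cyc e f

/-- The edge relation of `G` augmented by the edges in `P`. -/
def AugE (G : OuterStDigraph V) (P : Finset (V × V)) : V → V → Prop :=
  fun u v => G.E u v ∨ (u, v) ∈ P

/-- `P` is an acyclic HP-completion set for `G`: its edges are new, the augmented digraph
is acyclic and has a hamiltonian path. -/
def IsCompletion (G : OuterStDigraph V) (P : Finset (V × V)) : Prop :=
  (∀ e ∈ P, ¬ G.E e.1 e.2 ∧ e.1 ≠ e.2) ∧
  AcyclicRel (G.AugE P) ∧ (∃ l : List V, IsHamPathOf (G.AugE P) l)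

/-- The number of crossings the (chord-drawn) edges of the completion set `P` make with the
edges of `G` in the embedding. -/
noncomputable def crossNum (G : OuterStDigraph V) (P : Finset (V × V)) : ℕ :=
  Set.ncard {q : (V × V) × (V × V) | q.1 ∈ P ∧ G.E q.2.1 q.2.2 ∧ G.Cross q.1 q.2}

/-- `P` is a crossing-optimal acyclic HP-completion set for `G`. -/
def IsOptimalCompletion (G : OuterStDigraph V) (P : Finset (V × V)) : Prop :=
  G.IsCompletion P ∧ ∀ Q : Finset (V × V), G.IsCompletion Q → G.crossNum P ≤ G.crossNum Q

/-- `G` is an st-polygon: it has at least 4 vertices and no edge joins a vertex strictly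
inside the left side to a vertex strictly inside the right side (in either direction);
the only possible two-sided edge is the median `(s,t)`. -/
def IsStPolygon (G : OuterStDigraph V) : Prop :=
  4 ≤ Fintype.card V ∧
  ∀ u v, G.E u v → ¬ (u ∈ G.leftV ∧ v ∈ G.rightV) ∧ ¬ (u ∈ G.rightV ∧ v ∈ G.leftV)

end OuterStDigraph

open OuterStDigraph

section aux

variable {V : Type} [DecidableEq V]

/-- If the elements of `a` appear in `l` at strictly increasing indices, then `a <+ l`. -/
lemma sublist_of_indexOf_lt : ∀ (l a : List V), (∀ x ∈ a, x ∈ l) →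
    a.Pairwise (fun x y => l.idxOf x < l.idxOf y) → a.Sublist l := by
  intro l
  induction l with
  | nil =>
    intro a hmem _
    cases a with
    | nil => exact List.nil_sublist _
    | cons x r => exact absurd (hmem x (by simp)) (by simp)
  | cons b l' ih =>
    intro a hmem hp
    cases a with
    | nil => exact List.nil_sublist _
    | cons x r =>
      rcases List.pairwise_cons.1 hp with ⟨hxr, hr⟩
      by_cases hxb : x = b
      · subst hxb
        refine List.Sublist.cons₂ x ?_
        have hrne : ∀ y ∈ r, y ≠ x := by
          intro y hy hyx
          have := hxr y hy
          simp [hyx] at this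
        refine ih r (fun y hy => ?_) ?_
        · have := hmem y (List.mem_cons_of_mem _ hy)
          rcases List.mem_cons.1 this with h | h
          · exact absurd h (hrne y hy)
          · exact h
        · refine hr.imp_of_mem (fun {y z} hy hz h => ?_)
          rw [List.idxOf_cons_ne _ (hrne y hy).symm, List.idxOf_cons_ne _ (hrne z hz).symm] at h
          omega
      · refine List.Sublist.cons b ?_
        have hne : ∀ y ∈ x :: r, y ≠ b := by
          intro y hy hyb
          rcases List.mem_cons.1 hy with rfl | hy'
          · exact hxb hyb
          · have h1 := hxr y hy'
            subst hyb
            simp [List.idxOf_cons_ne _ hxb] at h1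
        refine ih _ (fun y hy => ?_) ?_
        · rcases List.mem_cons.1 (hmem y hy) with h | h
          · exact absurd h (hne y hy)
          · exact h
        · refine hp.imp_of_mem (fun {y z} hy hz h => ?_)
          rw [List.idxOf_cons_ne _ (hne y hy).symm, List.idxOf_cons_ne _ (hne z hz).symm] at h
          omega

end aux

/-- Any acyclic HP-completion set of an outerplanar st-digraph induces a hamiltonian path
that visits the vertices of the left side in the order they appear along the left side,
and likewise for the right side. -/
theorem stmt_2 {V : Type} [Fintype V] [DecidableEq V] (G : OuterStDigraph V)
    (P : Finset (V × V)) (hP : G.IsCompletion P)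
    (l : List V) (hl : IsHamPathOf (G.AugE P) l) :
    G.leftV.Sublist l ∧ G.rightV.Sublist l := by
  obtain ⟨hnd, hmem, hch⟩ := hl
  obtain ⟨-, hac, -⟩ := hP
  have hpl : l.Pairwise (Relation.TransGen (G.AugE P)) :=
    List.isChain_iff_pairwise.mp (hch.imp fun _ _ h => Relation.TransGen.single h)
  have key : ∀ u v, Relation.TransGen (G.AugE P) u v → l.idxOf u < l.idxOf v := by
    intro u v huv
    have hu := hmem u; have hv := hmem v
    have hiu := List.idxOf_lt_length_iff.2 hu
    have hiv := List.idxOf_lt_length_iff.2 hv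
    rcases lt_trichotomy (l.idxOf u) (l.idxOf v) with h | h | h
    · exact h
    · exfalso
      have huv' : u = v := (List.idxOf_inj hu).1 h
      exact hac v (huv' ▸ huv)
    · exfalso
      have h2 := List.pairwise_iff_get.mp hpl ⟨_, hiv⟩ ⟨_, hiu⟩ h
      rw [List.idxOf_get, List.idxOf_get] at h2
      exact hac v (h2.trans huv)
  have side : ∀ L : List V, ((G.s :: L) ++ [G.t]).Chain' G.E → L.Sublist l := by
    intro L hL
    have hsub : L.Sublist ((G.s :: L) ++ [G.t]) :=
      ((List.sublist_cons_self G.s L).trans (List.sublist_append_left _ _))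
    have hpw : ((G.s :: L) ++ [G.t]).Pairwise (Relation.TransGen G.E) :=
      List.isChain_iff_pairwise.mp (hL.imp fun _ _ h => Relation.TransGen.single h)
    have hpwL : L.Pairwise (Relation.TransGen G.E) := hpw.sublist hsub
    have hpw2 : L.Pairwise (fun x y => l.idxOf x < l.idxOf y) :=
      hpwL.imp fun h => key _ _ (Relation.TransGen.mono (fun a b hab => Or.inl hab) _ _ h)
    exact sublist_of_indexOf_lt l L (fun x _ => hmem x) hpw2
  exact ⟨side G.leftV G.left_path, side G.rightV G.right_path⟩
end

section
/- Every st-polygon admits a crossing-optimal acyclic HP-completion set of size at most 2. -/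
open OuterStDigraph

namespace StP

variable {V : Type} [Fintype V] [DecidableEq V]

/-- 1-based left vertex. -/
def lv (G : OuterStDigraph V) (i : ℕ) : V := G.leftV.getD (i-1) G.s
/-- 1-based right vertex. -/
def rv (G : OuterStDigraph V) (j : ℕ) : V := G.rightV.getD (j-1) G.s

def kk (G : OuterStDigraph V) : ℕ := G.leftV.length
def mm (G : OuterStDigraph V) : ℕ := G.rightV.length
def nn (G : OuterStDigraph V) : ℕ := kk G + mm G + 2

def pos (G : OuterStDigraph V) (v : V) : ℕ := G.cyc.idxOf v

variable (G : OuterStDigraph V)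

lemma cyc_eq : G.cyc = (G.s :: G.leftV) ++ (G.t :: G.rightV.reverse) := rfl

lemma perm_cyc : G.cyc.Perm ((G.s :: G.leftV) ++ (G.t :: G.rightV)) := by
  rw [cyc_eq]
  exact List.Perm.append (List.Perm.refl _) (List.Perm.cons _ (List.reverse_perm _))

lemma len_cyc : G.cyc.length = nn G := by
  simp [cyc_eq, nn, kk, mm]; omega

lemma nodup_cyc : G.cyc.Nodup := (perm_cyc G).nodup_iff.mpr G.nodup

lemma mem_cyc (v : V) : v ∈ G.cyc := (perm_cyc G).mem_iff.mpr (G.cover v)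

lemma pos_lt (v : V) : pos G v < nn G := by
  rw [← len_cyc]; exact List.idxOf_lt_length_iff.mpr (mem_cyc G v)

lemma pos_inj {u v : V} (h : pos G u = pos G v) : u = v :=
  (List.idxOf_inj (mem_cyc G u)).mp h

lemma pos_getElem (i : ℕ) (h : i < nn G) : pos G (G.cyc[i]'(by rwa [len_cyc])) = i :=
  List.Nodup.idxOf_getElem (nodup_cyc G) i _

lemma pos_s : pos G G.s = 0 := by
  rw [pos, cyc_eq]; simp

lemma pos_t : pos G G.t = kk G + 1 := by
  have h : kk G + 1 < nn G := by simp [nn]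
  have : G.cyc[kk G + 1]'(by rwa [len_cyc]) = G.t := by
    rw [List.getElem_of_eq (cyc_eq G)]
    rw [List.getElem_append_right (by simp [kk])]
    simp [kk]
  rw [← this]; exact pos_getElem G _ h

lemma pos_lv {i : ℕ} (h1 : 1 ≤ i) (h2 : i ≤ kk G) : pos G (lv G i) = i := by
  have hl : i - 1 < G.leftV.length := by simp [kk] at h2 ⊢; omega
  have hv : lv G i = G.leftV[i-1] := List.getD_eq_getElem _ _ hl
  have h : i < nn G := by simp [nn]; omega
  have : G.cyc[i]'(by rwa [len_cyc]) = G.leftV[i-1] := by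
    rw [List.getElem_of_eq (cyc_eq G)]
    rw [List.getElem_append_left (by simp [kk] at h2 ⊢; omega)]
    match i, h1 with
    | (j+1), _ => simp
  rw [hv, ← this]; exact pos_getElem G _ h

end StP
namespace StP
variable {V : Type} [Fintype V] [DecidableEq V] (G : OuterStDigraph V)

lemma pos_rv {j : ℕ} (h1 : 1 ≤ j) (h2 : j ≤ mm G) : pos G (rv G j) = nn G - j := by
  have hl : j - 1 < G.rightV.length := by simp [mm] at h2 ⊢; omega
  have hv : rv G j = G.rightV[j-1] := List.getD_eq_getElem _ _ hl
  have h : nn G - j < nn G := by simp [nn]; omega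
  have : G.cyc[nn G - j]'(by rwa [len_cyc]) = G.rightV[j-1] := by
    rw [List.getElem_of_eq (cyc_eq G)]
    rw [List.getElem_append_right (by simp [kk, nn, mm] at h2 ⊢; omega)]
    have h3 : nn G - j - (G.s :: G.leftV).length = mm G - j + 1 := by
      simp [kk, nn, mm] at h2 ⊢; omega
    simp only [h3]
    rw [List.getElem_cons_succ]
    rw [List.getElem_reverse]
    congr 1
    simp [mm] at h2 ⊢; omega
  rw [hv, ← this]; exact pos_getElem G _ h

/-- every vertex is s, t, lv i, or rv j -/
lemma vertex_cases (v : V) :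
    v = G.s ∨ v = G.t ∨ (∃ i, 1 ≤ i ∧ i ≤ kk G ∧ v = lv G i) ∨
      (∃ j, 1 ≤ j ∧ j ≤ mm G ∧ v = rv G j) := by
  have := G.cover v
  simp only [List.mem_append, List.mem_cons] at this
  rcases this with (h | h) | (h | h)
  · exact Or.inl h
  · refine Or.inr (Or.inr (Or.inl ?_))
    rcases List.mem_iff_getElem.mp h with ⟨i, hi, rfl⟩
    exact ⟨i+1, by omega, by simp [kk] at hi ⊢; omega,
      (List.getD_eq_getElem _ _ (by simpa using hi)).symm⟩
  · exact Or.inr (Or.inl h)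
  · refine Or.inr (Or.inr (Or.inr ?_))
    rcases List.mem_iff_getElem.mp h with ⟨j, hj, rfl⟩
    exact ⟨j+1, by omega, by simp [mm] at hj ⊢; omega,
      (List.getD_eq_getElem _ _ (by simpa using hj)).symm⟩

lemma pos_lv_mem {v : V} (hv : v ∈ G.leftV) : ∃ i, 1 ≤ i ∧ i ≤ kk G ∧ v = lv G i ∧ pos G v = i := by
  rcases List.mem_iff_getElem.mp hv with ⟨i, hi, rfl⟩
  refine ⟨i+1, by omega, by simp [kk] at hi ⊢; omega, ?_, ?_⟩
  · exact (List.getD_eq_getElem _ _ (by simpa using hi)).symm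
  · rw [show G.leftV[i] = lv G (i+1) from (List.getD_eq_getElem _ _ (by simpa using hi)).symm]
    exact pos_lv G (by omega) (by simp [kk] at hi ⊢; omega)

lemma pos_rv_mem {v : V} (hv : v ∈ G.rightV) : ∃ j, 1 ≤ j ∧ j ≤ mm G ∧ v = rv G j ∧ pos G v = nn G - j := by
  rcases List.mem_iff_getElem.mp hv with ⟨j, hj, rfl⟩
  refine ⟨j+1, by omega, by simp [mm] at hj ⊢; omega, ?_, ?_⟩
  · exact (List.getD_eq_getElem _ _ (by simpa using hj)).symm
  · rw [show G.rightV[j] = rv G (j+1) from (List.getD_eq_getElem _ _ (by simpa using hj)).symm]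
    exact pos_rv G (by omega) (by simp [mm] at hj ⊢; omega)

lemma lv_mem {i : ℕ} (h1 : 1 ≤ i) (h2 : i ≤ kk G) : lv G i ∈ G.leftV := by
  rw [lv, List.getD_eq_getElem _ _ (by simp [kk] at h2 ⊢; omega)]
  exact List.getElem_mem _

lemma rv_mem {j : ℕ} (h1 : 1 ≤ j) (h2 : j ≤ mm G) : rv G j ∈ G.rightV := by
  rw [rv, List.getD_eq_getElem _ _ (by simp [mm] at h2 ⊢; omega)]
  exact List.getElem_mem _

end StP
namespace StP
variable {V : Type} [Fintype V] [DecidableEq V]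

lemma chain'_transGen {α : Type*} {R : α → α → Prop} {l : List α} (h : l.Chain' R)
    {i j : ℕ} (hij : i < j) (hj : j < l.length) :
    Relation.TransGen R (l[i]'(by omega)) (l[j]'hj) := by
  induction j with
  | zero => omega
  | succ j ih =>
    have hstep : R (l[j]'(by omega)) (l[j+1]'hj) := by
      have := List.isChain_iff_getElem.mp h j (by omega)
      simpa using this
    rcases Nat.lt_or_ge i j with hlt | hge
    · exact Relation.TransGen.tail (ih hlt (by omega)) hstep
    · have : i = j := by omega
      subst this
      exact Relation.TransGen.single hstep

variable (G : OuterStDigraph V)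

def lchain : List V := (G.s :: G.leftV) ++ [G.t]
def rchain : List V := (G.s :: G.rightV) ++ [G.t]

lemma lchain_len : (lchain G).length = kk G + 2 := by simp [lchain, kk]
lemma rchain_len : (rchain G).length = mm G + 2 := by simp [rchain, mm]

lemma lchain_get {i : ℕ} (h : i < kk G + 2) :
    (lchain G)[i]'(by rw [lchain_len]; omega) =
      (if i = 0 then G.s else if i = kk G + 1 then G.t else lv G i) := by
  rcases Nat.eq_zero_or_pos i with rfl | hi
  · simp [lchain]
  rcases Nat.lt_or_ge i (kk G + 1) with h2 | h2
  · have hi' : i - 1 < G.leftV.length := by simp [kk] at h2 ⊢; omega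
    rw [List.getElem_of_eq (show (lchain G) = (G.s :: G.leftV) ++ [G.t] from rfl)]
    rw [List.getElem_append_left (by simp [kk] at h2 ⊢; omega)]
    have e0 : ¬ (i = 0) := by omega
    have e1 : ¬ (i = kk G + 1) := by omega
    rw [if_neg e0, if_neg e1]
    match i, hi with
    | (j+1), _ =>
      simp only [List.getElem_cons_succ]
      exact (List.getD_eq_getElem _ _ (by simpa using hi')).symm
  · have : i = kk G + 1 := by omega
    subst this
    rw [List.getElem_of_eq (show (lchain G) = (G.s :: G.leftV) ++ [G.t] from rfl)]
    rw [List.getElem_append_right (by simp [kk])]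
    simp [kk]

lemma rchain_get {j : ℕ} (h : j < mm G + 2) :
    (rchain G)[j]'(by rw [rchain_len]; omega) =
      (if j = 0 then G.s else if j = mm G + 1 then G.t else rv G j) := by
  rcases Nat.eq_zero_or_pos j with rfl | hj
  · simp [rchain]
  rcases Nat.lt_or_ge j (mm G + 1) with h2 | h2
  · have hj' : j - 1 < G.rightV.length := by simp [mm] at h2 ⊢; omega
    rw [List.getElem_of_eq (show (rchain G) = (G.s :: G.rightV) ++ [G.t] from rfl)]
    rw [List.getElem_append_left (by simp [mm] at h2 ⊢; omega)]
    have e0 : ¬ (j = 0) := by omega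
    have e1 : ¬ (j = mm G + 1) := by omega
    rw [if_neg e0, if_neg e1]
    match j, hj with
    | (i+1), _ =>
      simp only [List.getElem_cons_succ]
      exact (List.getD_eq_getElem _ _ (by simpa using hj')).symm
  · have : j = mm G + 1 := by omega
    subst this
    rw [List.getElem_of_eq (show (rchain G) = (G.s :: G.rightV) ++ [G.t] from rfl)]
    rw [List.getElem_append_right (by simp [mm])]
    simp [mm]

lemma lchain_chain : (lchain G).Chain' G.E := G.left_path
lemma rchain_chain : (rchain G).Chain' G.E := G.right_path

/-- transgen along the left chain -/
lemma trans_lchain {i j : ℕ} (hij : i < j) (hj : j ≤ kk G + 1) :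
    Relation.TransGen G.E
      ((lchain G)[i]'(by rw [lchain_len]; omega)) ((lchain G)[j]'(by rw [lchain_len]; omega)) :=
  chain'_transGen (lchain_chain G) hij (by rw [lchain_len]; omega)

lemma trans_rchain {i j : ℕ} (hij : i < j) (hj : j ≤ mm G + 1) :
    Relation.TransGen G.E
      ((rchain G)[i]'(by rw [rchain_len]; omega)) ((rchain G)[j]'(by rw [rchain_len]; omega)) :=
  chain'_transGen (rchain_chain G) hij (by rw [rchain_len]; omega)

lemma reach_from_s {v : V} (hv : v ≠ G.s) : Relation.TransGen G.E G.s v := by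
  rcases vertex_cases G v with rfl | rfl | ⟨i, h1, h2, rfl⟩ | ⟨j, h1, h2, rfl⟩
  · exact absurd rfl hv
  · have := trans_lchain G (i := 0) (j := kk G + 1) (by omega) (le_refl _)
    rwa [lchain_get G (by omega), lchain_get G (by omega), if_pos rfl, if_neg (by omega),
      if_pos rfl] at this
  · have := trans_lchain G (i := 0) (j := i) (by omega) (by omega)
    rwa [lchain_get G (by omega), lchain_get G (by omega), if_pos rfl, if_neg (by omega),
      if_neg (by omega)] at this
  · have := trans_rchain G (i := 0) (j := j) (by omega) (by omega)
    rwa [rchain_get G (by omega), rchain_get G (by omega), if_pos rfl, if_neg (by omega),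
      if_neg (by omega)] at this

lemma reach_to_t {v : V} (hv : v ≠ G.t) : Relation.TransGen G.E v G.t := by
  rcases vertex_cases G v with rfl | rfl | ⟨i, h1, h2, rfl⟩ | ⟨j, h1, h2, rfl⟩
  · have := trans_lchain G (i := 0) (j := kk G + 1) (by omega) (le_refl _)
    rwa [lchain_get G (by omega), lchain_get G (by omega), if_pos rfl, if_neg (by omega),
      if_pos rfl] at this
  · exact absurd rfl hv
  · have := trans_lchain G (i := i) (j := kk G + 1) (by omega) (le_refl _)
    rwa [lchain_get G (by omega), lchain_get G (by omega), if_neg (by omega),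
      if_neg (by omega), if_neg (by omega), if_pos rfl] at this
  · have := trans_rchain G (i := j) (j := mm G + 1) (by omega) (le_refl _)
    rwa [rchain_get G (by omega), rchain_get G (by omega), if_neg (by omega),
      if_neg (by omega), if_neg (by omega), if_pos rfl] at this

end StP
namespace StP
variable {V : Type} [Fintype V] [DecidableEq V] (G : OuterStDigraph V)

lemma no_edge_to_s {v : V} : ¬ G.E v G.s := by
  intro h
  have hv : v ≠ G.s := G.no_loops v G.s h
  exact (G.acyclic G.s) ((reach_from_s G hv).tail h)

lemma no_edge_from_t {v : V} : ¬ G.E G.t v := by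
  intro h
  exact (G.acyclic G.t) (Relation.TransGen.head h (reach_to_t G (fun hv => G.no_loops G.t v h hv.symm)))

lemma trans_lv {i j : ℕ} (h1 : 1 ≤ i) (hij : i < j) (hj : j ≤ kk G) :
    Relation.TransGen G.E (lv G i) (lv G j) := by
  have := trans_lchain G (i := i) (j := j) hij (by omega)
  rwa [lchain_get G (by omega), lchain_get G (by omega), if_neg (by omega), if_neg (by omega),
    if_neg (by omega), if_neg (by omega)] at this

lemma trans_rv {i j : ℕ} (h1 : 1 ≤ i) (hij : i < j) (hj : j ≤ mm G) :
    Relation.TransGen G.E (rv G i) (rv G j) := by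
  have := trans_rchain G (i := i) (j := j) hij (by omega)
  rwa [rchain_get G (by omega), rchain_get G (by omega), if_neg (by omega), if_neg (by omega),
    if_neg (by omega), if_neg (by omega)] at this

lemma lv_lt_of_E {i j : ℕ} (h1 : 1 ≤ i) (h2 : i ≤ kk G) (h3 : 1 ≤ j) (h4 : j ≤ kk G)
    (h : G.E (lv G i) (lv G j)) : i < j := by
  by_contra hc
  push_neg at hc
  rcases Nat.lt_or_ge j i with hlt | hge
  · exact (G.acyclic (lv G j)) ((trans_lv G h3 hlt h2).tail h)
  · have : i = j := by omega
    exact G.no_loops _ _ h (by rw [this])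

lemma rv_lt_of_E {i j : ℕ} (h1 : 1 ≤ i) (h2 : i ≤ mm G) (h3 : 1 ≤ j) (h4 : j ≤ mm G)
    (h : G.E (rv G i) (rv G j)) : i < j := by
  by_contra hc
  push_neg at hc
  rcases Nat.lt_or_ge j i with hlt | hge
  · exact (G.acyclic (rv G j)) ((trans_rv G h3 hlt h2).tail h)
  · have : i = j := by omega
    exact G.no_loops _ _ h (by rw [this])

def LeftE (f : V × V) : Prop := pos G f.1 < pos G f.2 ∧ pos G f.2 ≤ kk G + 1

def RightE (f : V × V) : Prop :=
  (pos G f.1 = 0 ∨ kk G + 2 ≤ pos G f.1) ∧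
  (pos G f.2 = kk G + 1 ∨ kk G + 2 ≤ pos G f.2) ∧
  (kk G + 2 ≤ pos G f.1 → kk G + 2 ≤ pos G f.2 → pos G f.2 < pos G f.1)

lemma classify (hpoly : G.IsStPolygon) {x y : V} (h : G.E x y) :
    LeftE G (x, y) ∨ RightE G (x, y) := by
  have hkm : nn G = kk G + mm G + 2 := rfl
  rcases vertex_cases G x with rfl | rfl | ⟨i, hi1, hi2, rfl⟩ | ⟨j, hj1, hj2, rfl⟩
  · -- x = s
    rcases vertex_cases G y with rfl | rfl | ⟨i, hi1, hi2, rfl⟩ | ⟨j, hj1, hj2, rfl⟩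
    · exact absurd rfl (G.no_loops _ _ h)
    · left; constructor <;> simp [pos_s, pos_t]
    · left
      constructor
      · rw [pos_s, pos_lv G hi1 hi2]; omega
      · rw [pos_lv G hi1 hi2]; omega
    · right
      refine ⟨Or.inl (pos_s G), Or.inr ?_, ?_⟩
      · rw [pos_rv G hj1 hj2]; omega
      · rw [pos_s]; omega
  · exact absurd h (no_edge_from_t G)
  · -- x = lv i
    rcases vertex_cases G y with rfl | rfl | ⟨j, hj1, hj2, rfl⟩ | ⟨j, hj1, hj2, rfl⟩
    · exact absurd h (no_edge_to_s G)
    · left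
      constructor
      · rw [pos_lv G hi1 hi2, pos_t]; omega
      · rw [pos_t]
    · left
      have := lv_lt_of_E G hi1 hi2 hj1 hj2 h
      constructor
      · rw [pos_lv G hi1 hi2, pos_lv G hj1 hj2]; omega
      · rw [pos_lv G hj1 hj2]; omega
    · exact absurd ⟨lv_mem G hi1 hi2, rv_mem G hj1 hj2⟩ ((hpoly.2 _ _ h).1)
  · -- x = rv j
    rcases vertex_cases G y with rfl | rfl | ⟨i, hi1, hi2, rfl⟩ | ⟨i, hi1, hi2, rfl⟩
    · exact absurd h (no_edge_to_s G)
    · right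
      refine ⟨Or.inr ?_, Or.inl (pos_t G), ?_⟩
      · rw [pos_rv G hj1 hj2]; omega
      · rw [pos_t]; omega
    · exact absurd ⟨rv_mem G hj1 hj2, lv_mem G hi1 hi2⟩ ((hpoly.2 _ _ h).2)
    · right
      have := rv_lt_of_E G hj1 hj2 hi1 hi2 h
      refine ⟨Or.inr ?_, Or.inr ?_, fun _ _ => ?_⟩
      · rw [pos_rv G hj1 hj2]; omega
      · rw [pos_rv G hi1 hi2]; omega
      · rw [pos_rv G hj1 hj2, pos_rv G hi1 hi2]; omega

end StP
namespace StP
variable {V : Type} [Fintype V] [DecidableEq V]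

lemma inCycArc_iff {n a b x : ℕ} (ha : a < n) (hb : b < n) (hx : x < n) :
    inCycArc n a b x ↔ ((a < x ∧ (x < b ∨ b < a)) ∨ (x < a ∧ x < b ∧ b < a)) := by
  have e1 : (x + n - a) % n = if a ≤ x then x - a else x + n - a := by
    split
    · rw [show x + n - a = (x - a) + n by omega, Nat.add_mod_right, Nat.mod_eq_of_lt (by omega)]
    · rw [Nat.mod_eq_of_lt (by omega)]
  have e2 : (b + n - a) % n = if a ≤ b then b - a else b + n - a := by
    split
    · rw [show b + n - a = (b - a) + n by omega, Nat.add_mod_right, Nat.mod_eq_of_lt (by omega)]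
    · rw [Nat.mod_eq_of_lt (by omega)]
  rw [inCycArc, e1, e2]
  split_ifs <;> omega

variable (G : OuterStDigraph V)

lemma cross_iff (e f : V × V) :
    G.Cross e f ↔ (pos G e.1 ≠ pos G f.1 ∧ pos G e.1 ≠ pos G f.2 ∧
      pos G e.2 ≠ pos G f.1 ∧ pos G e.2 ≠ pos G f.2 ∧
      Xor' (inCycArc (nn G) (pos G e.1) (pos G e.2) (pos G f.1))
           (inCycArc (nn G) (pos G e.1) (pos G e.2) (pos G f.2))) := by
  have hinj : ∀ u v : V, u ≠ v ↔ pos G u ≠ pos G v := by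
    intro u v
    constructor
    · intro h hp; exact h (pos_inj G hp)
    · intro h hp; exact h (by rw [hp])
  rw [OuterStDigraph.Cross, chordsCrossIn]
  rw [len_cyc]
  rw [hinj, hinj, hinj, hinj]
  rfl

/-- chord position hypothesis: e is a chord between `lv a`-position and `rv b`-position -/
def ChordAt (e : V × V) (a b : ℕ) : Prop :=
  (pos G e.1 = a ∧ pos G e.2 = nn G - b) ∨ (pos G e.1 = nn G - b ∧ pos G e.2 = a)

lemma cross_left_iff {e : V × V} {a b : ℕ} (hc : ChordAt G e a b)
    (ha1 : 1 ≤ a) (ha2 : a ≤ kk G) (hb1 : 1 ≤ b) (hb2 : b ≤ mm G)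
    {f : V × V} (hf : LeftE G f) :
    (G.Cross e f ↔ (pos G f.1 < a ∧ a < pos G f.2)) := by
  have hkm : nn G = kk G + mm G + 2 := rfl
  obtain ⟨h1, h2⟩ := hf
  have hx1 := pos_lt G f.1
  have hx2 := pos_lt G f.2
  have he1 := pos_lt G e.1
  have he2 := pos_lt G e.2
  rw [cross_iff, inCycArc_iff he1 he2 hx1, inCycArc_iff he1 he2 hx2, Xor', Xor]
  rcases hc with ⟨hp1, hp2⟩ | ⟨hp1, hp2⟩ <;> rw [hp1, hp2] <;>
    constructor <;> intro hh <;> omega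

lemma cross_right_iff {e : V × V} {a b : ℕ} (hc : ChordAt G e a b)
    (ha1 : 1 ≤ a) (ha2 : a ≤ kk G) (hb1 : 1 ≤ b) (hb2 : b ≤ mm G)
    {f : V × V} (hf : RightE G f) :
    (G.Cross e f ↔ ((pos G f.1 = 0 ∨ nn G - b < pos G f.1) ∧
      (pos G f.2 = kk G + 1 ∨ pos G f.2 < nn G - b))) := by
  have hkm : nn G = kk G + mm G + 2 := rfl
  obtain ⟨h1, h2, h3⟩ := hf
  have hx1 := pos_lt G f.1
  have hx2 := pos_lt G f.2
  have he1 := pos_lt G e.1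
  have he2 := pos_lt G e.2
  rw [cross_iff, inCycArc_iff he1 he2 hx1, inCycArc_iff he1 he2 hx2, Xor', Xor]
  rcases hc with ⟨hp1, hp2⟩ | ⟨hp1, hp2⟩ <;> rw [hp1, hp2] <;>
    constructor <;> intro hh <;> omega

end StP
namespace StP
variable {V : Type} [Fintype V] [DecidableEq V] (G : OuterStDigraph V)

def Sset (e : V × V) : Set (V × V) := {f | G.E f.1 f.2 ∧ G.Cross e f}

def LSp (a : ℕ) : Set (V × V) :=
  {f | G.E f.1 f.2 ∧ pos G f.1 < a ∧ a < pos G f.2 ∧ pos G f.2 ≤ kk G + 1}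

def RSp (b : ℕ) : Set (V × V) :=
  {f | G.E f.1 f.2 ∧ (pos G f.1 = 0 ∨ nn G - b < pos G f.1) ∧
    (pos G f.2 = kk G + 1 ∨ (kk G + 2 ≤ pos G f.2 ∧ pos G f.2 < nn G - b))}

def Msp : Set (V × V) := {f | G.E f.1 f.2 ∧ f.1 = G.s ∧ f.2 = G.t}

lemma Sset_eq (hpoly : G.IsStPolygon) {e : V × V} {a b : ℕ} (hc : ChordAt G e a b)
    (ha1 : 1 ≤ a) (ha2 : a ≤ kk G) (hb1 : 1 ≤ b) (hb2 : b ≤ mm G) :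
    Sset G e = LSp G a ∪ RSp G b := by
  have hkm : nn G = kk G + mm G + 2 := rfl
  ext f
  simp only [Sset, LSp, RSp, Set.mem_setOf_eq, Set.mem_union]
  constructor
  · rintro ⟨hE, hX⟩
    rcases classify G hpoly hE with hL | hR
    · left
      rw [Prod.mk.eta] at hL
      have h := (cross_left_iff G hc ha1 ha2 hb1 hb2 hL).mp hX
      obtain ⟨hl1, hl2⟩ := hL
      exact ⟨hE, h.1, h.2, hl2⟩
    · right
      rw [Prod.mk.eta] at hR
      have h := (cross_right_iff G hc ha1 ha2 hb1 hb2 hR).mp hX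
      obtain ⟨r1, r2, r3⟩ := hR
      obtain ⟨g1, g2⟩ := h
      exact ⟨hE, g1, by omega⟩
  · rintro (⟨hE, h1, h2, h3⟩ | ⟨hE, h1, h2⟩)
    · have hL : LeftE G f := ⟨by omega, by omega⟩
      exact ⟨hE, (cross_left_iff G hc ha1 ha2 hb1 hb2 hL).mpr ⟨h1, h2⟩⟩
    · have hR : RightE G f := ⟨by omega, by omega, by intro p1 p2; omega⟩
      exact ⟨hE, (cross_right_iff G hc ha1 ha2 hb1 hb2 hR).mpr ⟨h1, by omega⟩⟩

lemma inter_eq {a b : ℕ} (ha1 : 1 ≤ a) (ha2 : a ≤ kk G) (hb1 : 1 ≤ b) (hb2 : b ≤ mm G) :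
    LSp G a ∩ RSp G b = Msp G := by
  have hkm : nn G = kk G + mm G + 2 := rfl
  ext f
  simp only [LSp, RSp, Msp, Set.mem_setOf_eq, Set.mem_inter_iff]
  constructor
  · rintro ⟨⟨hE, h1, h2, h3⟩, ⟨-, g1, g2⟩⟩
    refine ⟨hE, ?_, ?_⟩
    · have hh : pos G f.1 = 0 := by omega
      exact pos_inj G (by rw [hh, pos_s])
    · have hh : pos G f.2 = kk G + 1 := by omega
      exact pos_inj G (by rw [hh, pos_t])
  · rintro ⟨hE, h1, h2⟩
    constructor
    · exact ⟨hE, by rw [h1, pos_s]; omega, by rw [h2, pos_t]; omega, by rw [h2, pos_t]⟩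
    · exact ⟨hE, Or.inl (by rw [h1, pos_s]), Or.inl (by rw [h2, pos_t])⟩

lemma Msp_sub_LSp {a : ℕ} (ha1 : 1 ≤ a) (ha2 : a ≤ kk G) : Msp G ⊆ LSp G a := by
  rintro f ⟨hE, h1, h2⟩
  exact ⟨hE, by rw [h1, pos_s]; omega, by rw [h2, pos_t]; omega, by rw [h2, pos_t]⟩

lemma Msp_sub_RSp {b : ℕ} (hb1 : 1 ≤ b) (hb2 : b ≤ mm G) : Msp G ⊆ RSp G b := by
  rintro f ⟨hE, h1, h2⟩
  exact ⟨hE, Or.inl (by rw [h1, pos_s]), Or.inl (by rw [h2, pos_t])⟩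

lemma nS_add (hpoly : G.IsStPolygon) {e : V × V} {a b : ℕ} (hc : ChordAt G e a b)
    (ha1 : 1 ≤ a) (ha2 : a ≤ kk G) (hb1 : 1 ≤ b) (hb2 : b ≤ mm G) :
    (Sset G e).ncard + (Msp G).ncard = (LSp G a).ncard + (RSp G b).ncard := by
  rw [Sset_eq G hpoly hc ha1 ha2 hb1 hb2, ← inter_eq G ha1 ha2 hb1 hb2]
  exact Set.ncard_union_add_ncard_inter _ _ (Set.toFinite _) (Set.toFinite _)

lemma M_le_LSp {a : ℕ} (ha1 : 1 ≤ a) (ha2 : a ≤ kk G) : (Msp G).ncard ≤ (LSp G a).ncard :=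
  Set.ncard_le_ncard (Msp_sub_LSp G ha1 ha2) (Set.toFinite _)

lemma M_le_RSp {b : ℕ} (hb1 : 1 ≤ b) (hb2 : b ≤ mm G) : (Msp G).ncard ≤ (RSp G b).ncard :=
  Set.ncard_le_ncard (Msp_sub_RSp G hb1 hb2) (Set.toFinite _)

/-- crossNum as a sum over the completion edges -/
lemma crossNum_eq_sum (P : Finset (V × V)) :
    G.crossNum P = ∑ e ∈ P, (Sset G e).ncard := by
  classical
  induction P using Finset.induction with
  | empty =>
    rw [OuterStDigraph.crossNum]
    simp
  | @insert e P he ih =>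
    rw [OuterStDigraph.crossNum] at ih ⊢
    have hsplit : {q : (V × V) × (V × V) | q.1 ∈ insert e P ∧ G.E q.2.1 q.2.2 ∧ G.Cross q.1 q.2}
        = (Prod.mk e '' Sset G e) ∪ {q : (V × V) × (V × V) | q.1 ∈ P ∧ G.E q.2.1 q.2.2 ∧ G.Cross q.1 q.2} := by
      ext q
      simp only [Set.mem_setOf_eq, Finset.mem_insert, Set.mem_union, Set.mem_image]
      constructor
      · rintro ⟨h1 | h1, h2⟩
        · refine Or.inl ⟨q.2, ⟨h2.1, by rw [← h1]; exact h2.2⟩, ?_⟩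
          rw [← h1]
        · exact Or.inr ⟨h1, h2⟩
      · rintro (⟨f, hf, rfl⟩ | ⟨h1, h2⟩)
        · exact ⟨Or.inl rfl, hf⟩
        · exact ⟨Or.inr h1, h2⟩
    rw [hsplit, Set.ncard_union_eq ?hd (Set.toFinite _) (Set.toFinite _), ih,
      Set.ncard_image_of_injective _ (fun x y h => (Prod.ext_iff.mp h).2), Finset.sum_insert he]
    case hd =>
      rw [Set.disjoint_left]
      rintro q ⟨f, hf, rfl⟩ ⟨h1, -⟩
      exact he h1

lemma crossNum_mono {P Q : Finset (V × V)} (h : P ⊆ Q) : G.crossNum P ≤ G.crossNum Q := by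
  rw [OuterStDigraph.crossNum, OuterStDigraph.crossNum]
  refine Set.ncard_le_ncard ?_ (Set.toFinite _)
  rintro q ⟨h1, h2⟩
  exact ⟨h h1, h2⟩

end StP
namespace StP
variable {V : Type} [Fintype V] [DecidableEq V] (G : OuterStDigraph V)

/- step edges of the two boundary paths -/
lemma lchain_step {i : ℕ} (h : i + 1 < kk G + 2) :
    G.E ((lchain G)[i]'(by rw [lchain_len]; omega)) ((lchain G)[i+1]'(by rw [lchain_len]; omega)) := by
  have := List.isChain_iff_getElem.mp (lchain_chain G) i (by rw [lchain_len]; omega)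
  simpa using this

lemma rchain_step {i : ℕ} (h : i + 1 < mm G + 2) :
    G.E ((rchain G)[i]'(by rw [rchain_len]; omega)) ((rchain G)[i+1]'(by rw [rchain_len]; omega)) := by
  have := List.isChain_iff_getElem.mp (rchain_chain G) i (by rw [rchain_len]; omega)
  simpa using this

lemma E_s_l1 (hk : 1 ≤ kk G) : G.E G.s (lv G 1) := by
  have := lchain_step G (i := 0) (by omega)
  rwa [lchain_get G (by omega), lchain_get G (by omega), if_pos rfl, if_neg (by omega),
    if_neg (by omega)] at this

lemma E_l_succ {i : ℕ} (h1 : 1 ≤ i) (h2 : i < kk G) : G.E (lv G i) (lv G (i+1)) := by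
  have := lchain_step G (i := i) (by omega)
  rwa [lchain_get G (by omega), lchain_get G (by omega), if_neg (by omega), if_neg (by omega),
    if_neg (by omega), if_neg (by omega)] at this

lemma E_lk_t (hk : 1 ≤ kk G) : G.E (lv G (kk G)) G.t := by
  have := lchain_step G (i := kk G) (by omega)
  rwa [lchain_get G (by omega), lchain_get G (by omega), if_neg (by omega), if_neg (by omega),
    if_neg (by omega), if_pos rfl] at this

lemma E_s_r1 (hm : 1 ≤ mm G) : G.E G.s (rv G 1) := by
  have := rchain_step G (i := 0) (by omega)
  rwa [rchain_get G (by omega), rchain_get G (by omega), if_pos rfl, if_neg (by omega),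
    if_neg (by omega)] at this

lemma E_r_succ {i : ℕ} (h1 : 1 ≤ i) (h2 : i < mm G) : G.E (rv G i) (rv G (i+1)) := by
  have := rchain_step G (i := i) (by omega)
  rwa [rchain_get G (by omega), rchain_get G (by omega), if_neg (by omega), if_neg (by omega),
    if_neg (by omega), if_neg (by omega)] at this

lemma E_rm_t (hm : 1 ≤ mm G) : G.E (rv G (mm G)) G.t := by
  have := rchain_step G (i := mm G) (by omega)
  rwa [rchain_get G (by omega), rchain_get G (by omega), if_neg (by omega), if_neg (by omega),
    if_neg (by omega), if_pos rfl] at this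

lemma chain_L : G.leftV.Chain' G.E := by
  have h1 : (G.s :: G.leftV).Chain' G.E :=
    (lchain_chain G).prefix (List.prefix_append _ _)
  exact h1.tail

lemma chain_R : G.rightV.Chain' G.E := by
  have h1 : (G.s :: G.rightV).Chain' G.E :=
    (rchain_chain G).prefix (List.prefix_append _ _)
  exact h1.tail

lemma chain_L_t : (G.leftV ++ [G.t]).Chain' G.E := by
  have : (G.s :: (G.leftV ++ [G.t])).Chain' G.E := by
    have := lchain_chain G
    rwa [lchain, List.cons_append] at this
  exact this.tail

lemma chain_R_t : (G.rightV ++ [G.t]).Chain' G.E := by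
  have : (G.s :: (G.rightV ++ [G.t])).Chain' G.E := by
    have := rchain_chain G
    rwa [rchain, List.cons_append] at this
  exact this.tail

/- getD-getLast?/head? helpers -/
lemma take_head?' {α : Type*} (l : List α) (a : ℕ) (h0 : 0 < a) (hl : 0 < l.length) :
    (l.take a).head? = some (l[0]'hl) := by
  rw [List.head?_eq_getElem?, List.getElem?_take, if_pos (by omega)]
  exact List.getElem?_eq_getElem hl

lemma take_getLast?' {α : Type*} (l : List α) (a : ℕ) (h1 : 1 ≤ a) (h2 : a ≤ l.length) :
    (l.take a).getLast? = some (l[a-1]'(by omega)) := by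
  rw [List.getLast?_take, if_neg (by omega), List.getElem?_eq_getElem (by omega)]
  rfl

lemma lv_ne_rv {i j : ℕ} (h1 : 1 ≤ i) (h2 : i ≤ kk G) (h3 : 1 ≤ j) (h4 : j ≤ mm G) :
    lv G i ≠ rv G j := by
  intro h
  have := pos_lv G h1 h2
  rw [h, pos_rv G h3 h4] at this
  have hkm : nn G = kk G + mm G + 2 := rfl
  omega

/- rank functions -/
def rnkL (a p : ℕ) : ℕ :=
  if p ≤ a then p else if p = kk G + 1 then nn G - 1
  else if kk G + 2 ≤ p then a + (nn G - p) else mm G + p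

def rnkR (b p : ℕ) : ℕ :=
  if p = 0 then 0 else if p ≤ kk G then b + p else if p = kk G + 1 then nn G - 1
  else if nn G - b ≤ p then nn G - p else kk G + (nn G - p)

lemma rnkL_lt_left {a px py : ℕ} (ha : a ≤ kk G) (h1 : px < py) (h2 : py ≤ kk G + 1) :
    rnkL G a px < rnkL G a py := by
  have hkm : nn G = kk G + mm G + 2 := rfl
  unfold rnkL; split_ifs <;> omega

lemma rnkL_lt_right {a px py : ℕ} (ha : a ≤ kk G) (hpx : px < nn G) (hpy : py < nn G)
    (h1 : px = 0 ∨ kk G + 2 ≤ px) (h2 : py = kk G + 1 ∨ kk G + 2 ≤ py)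
    (h3 : kk G + 2 ≤ px → kk G + 2 ≤ py → py < px) :
    rnkL G a px < rnkL G a py := by
  have hkm : nn G = kk G + mm G + 2 := rfl
  unfold rnkL; split_ifs <;> omega

lemma rnkR_lt_left {b px py : ℕ} (hb1 : 1 ≤ b) (hb2 : b + 1 ≤ mm G) (h1 : px < py)
    (h2 : py ≤ kk G + 1) : rnkR G b px < rnkR G b py := by
  have hkm : nn G = kk G + mm G + 2 := rfl
  unfold rnkR; split_ifs <;> omega

lemma rnkR_lt_right {b px py : ℕ} (hb1 : 1 ≤ b) (hb2 : b + 1 ≤ mm G)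
    (hpx : px < nn G) (hpy : py < nn G)
    (h1 : px = 0 ∨ kk G + 2 ≤ px) (h2 : py = kk G + 1 ∨ kk G + 2 ≤ py)
    (h3 : kk G + 2 ≤ px → kk G + 2 ≤ py → py < px) :
    rnkR G b px < rnkR G b py := by
  have hkm : nn G = kk G + mm G + 2 := rfl
  unfold rnkR; split_ifs <;> omega

lemma acyclic_of_rank {α : Type} {R : α → α → Prop} (r : α → ℕ)
    (h : ∀ u v, R u v → r u < r v) : AcyclicRel R := by
  intro v hv
  have key : ∀ u w, Relation.TransGen R u w → r u < r w := by
    intro u w huw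
    induction huw with
    | single h1 => exact h _ _ h1
    | tail _ h2 ih => exact lt_trans ih (h _ _ h2)
  exact lt_irrefl _ (key v v hv)

/- the candidate completion sets -/
def PsetL (a : ℕ) : Finset (V × V) :=
  if a = 0 then {(rv G (mm G), lv G 1)}
  else if a = kk G then {(lv G (kk G), rv G 1)}
  else {(lv G a, rv G 1), (rv G (mm G), lv G (a+1))}

def PsetR (b : ℕ) : Finset (V × V) :=
  {(rv G b, lv G 1), (lv G (kk G), rv G (b+1))}

def hamL (a : ℕ) : List V :=
  (G.s :: G.leftV.take a) ++ (G.rightV ++ (G.leftV.drop a ++ [G.t]))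

def hamR (b : ℕ) : List V :=
  (G.s :: G.rightV.take b) ++ (G.leftV ++ (G.rightV.drop b ++ [G.t]))

lemma hamL_perm {a : ℕ} (ha : a ≤ kk G) :
    (hamL G a).Perm ((G.s :: G.leftV) ++ (G.t :: G.rightV)) := by
  have h0 : hamL G a = G.s :: (G.leftV.take a ++ (G.rightV ++ (G.leftV.drop a ++ [G.t]))) := rfl
  rw [h0, show (G.s :: G.leftV) ++ (G.t :: G.rightV) = G.s :: (G.leftV ++ ([G.t] ++ G.rightV)) from rfl]
  refine List.Perm.cons _ ?_
  refine List.Perm.trans (List.Perm.append_left _ List.perm_append_comm) ?_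
  have h1 : G.leftV.take a ++ ((G.leftV.drop a ++ [G.t]) ++ G.rightV) = (G.leftV ++ [G.t]) ++ G.rightV := by
    rw [← List.append_assoc, ← List.append_assoc, List.take_append_drop]
  rw [h1, List.append_assoc]

lemma hamR_perm {b : ℕ} (hb : b ≤ mm G) :
    (hamR G b).Perm ((G.s :: G.leftV) ++ (G.t :: G.rightV)) := by
  have h0 : hamR G b = G.s :: (G.rightV.take b ++ (G.leftV ++ (G.rightV.drop b ++ [G.t]))) := rfl
  rw [h0, show (G.s :: G.leftV) ++ (G.t :: G.rightV) = G.s :: (G.leftV ++ ([G.t] ++ G.rightV)) from rfl]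
  refine List.Perm.cons _ ?_
  have p1 : (G.rightV.take b ++ (G.leftV ++ (G.rightV.drop b ++ [G.t]))).Perm
      (G.leftV ++ ((G.rightV.drop b ++ [G.t]) ++ G.rightV.take b)) := by
    refine List.Perm.trans List.perm_append_comm ?_
    rw [List.append_assoc]
  refine p1.trans (List.Perm.append_left _ ?_)
  refine List.Perm.trans List.perm_append_comm ?_
  have h1 : G.rightV.take b ++ (G.rightV.drop b ++ [G.t]) = G.rightV ++ [G.t] := by
    rw [← List.append_assoc, List.take_append_drop]
  rw [h1]
  exact List.perm_append_comm

end StP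
namespace StP
variable {V : Type} [Fintype V] [DecidableEq V] (G : OuterStDigraph V)

lemma R_head {X : List V} (hm : 1 ≤ mm G) : (G.rightV ++ X).head? = some (rv G 1) := by
  rw [List.head?_append, List.head?_eq_getElem?,
    List.getElem?_eq_getElem (show 0 < G.rightV.length from hm)]
  rw [show G.rightV[0] = rv G 1 from (List.getD_eq_getElem _ _ _).symm]
  rfl

lemma L_head {X : List V} (hk : 1 ≤ kk G) : (G.leftV ++ X).head? = some (lv G 1) := by
  rw [List.head?_append, List.head?_eq_getElem?,
    List.getElem?_eq_getElem (show 0 < G.leftV.length from hk)]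
  rw [show G.leftV[0] = lv G 1 from (List.getD_eq_getElem _ _ _).symm]
  rfl

lemma R_last (hm : 1 ≤ mm G) : G.rightV.getLast? = some (rv G (mm G)) := by
  have hlen : G.rightV.length = mm G := rfl
  rw [List.getLast?_eq_getElem?, show G.rightV.length - 1 = mm G - 1 from by rw [hlen],
    List.getElem?_eq_getElem (show mm G - 1 < G.rightV.length by omega),
    show (G.rightV[mm G - 1]'(by omega)) = rv G (mm G) from (List.getD_eq_getElem _ _ _).symm]

lemma L_last (hk : 1 ≤ kk G) : G.leftV.getLast? = some (lv G (kk G)) := by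
  have hlen : G.leftV.length = kk G := rfl
  rw [List.getLast?_eq_getElem?, show G.leftV.length - 1 = kk G - 1 from by rw [hlen],
    List.getElem?_eq_getElem (show kk G - 1 < G.leftV.length by omega),
    show (G.leftV[kk G - 1]'(by omega)) = lv G (kk G) from (List.getD_eq_getElem _ _ _).symm]

lemma takeL_last {a : ℕ} (h1 : 1 ≤ a) (h2 : a ≤ kk G) :
    (G.s :: G.leftV.take a).getLast? = some (lv G a) := by
  have hlen : G.leftV.length = kk G := rfl
  rw [show G.s :: G.leftV.take a = [G.s] ++ G.leftV.take a from rfl, List.getLast?_append,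
    take_getLast?' _ _ h1 (show a ≤ G.leftV.length from h2)]
  rw [show (G.leftV[a-1]'(by omega)) = lv G a from (List.getD_eq_getElem _ _ _).symm]
  rfl

lemma takeR_last {b : ℕ} (h1 : 1 ≤ b) (h2 : b ≤ mm G) :
    (G.s :: G.rightV.take b).getLast? = some (rv G b) := by
  have hlen : G.rightV.length = mm G := rfl
  rw [show G.s :: G.rightV.take b = [G.s] ++ G.rightV.take b from rfl, List.getLast?_append,
    take_getLast?' _ _ h1 (show b ≤ G.rightV.length from h2)]
  rw [show (G.rightV[b-1]'(by omega)) = rv G b from (List.getD_eq_getElem _ _ _).symm]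
  rfl

lemma dropL_head {a : ℕ} {X : List V} (h : a < kk G) :
    (G.leftV.drop a ++ X).head? = some (lv G (a+1)) := by
  rw [List.head?_append, List.head?_drop, List.getElem?_eq_getElem (show a < G.leftV.length from h)]
  rw [show (G.leftV[a]'(show a < G.leftV.length from h)) = lv G (a+1) from (List.getD_eq_getElem _ _ _).symm]
  rfl

lemma dropR_head {b : ℕ} {X : List V} (h : b < mm G) :
    (G.rightV.drop b ++ X).head? = some (rv G (b+1)) := by
  rw [List.head?_append, List.head?_drop, List.getElem?_eq_getElem (show b < G.rightV.length from h)]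
  rw [show (G.rightV[b]'(show b < G.rightV.length from h)) = rv G (b+1) from (List.getD_eq_getElem _ _ _).symm]
  rfl

lemma hamL_chain (hk : 1 ≤ kk G) (hm : 1 ≤ mm G) {a : ℕ} (ha : a ≤ kk G) :
    (hamL G a).Chain' (G.AugE (PsetL G a)) := by
  set Aug := G.AugE (PsetL G a) with hAug
  have himp : ∀ {l : List V}, l.Chain' G.E → l.Chain' Aug :=
    fun hc => hc.imp (fun _ _ h => Or.inl h)
  have cA : (G.s :: G.leftV.take a).Chain' Aug := by
    refine himp (((lchain_chain G).prefix (List.prefix_append _ _)).prefix ?_)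
    rw [show G.s :: G.leftV.take a = (G.s :: G.leftV).take (a+1) from rfl]
    exact List.take_prefix _ _
  have cR : G.rightV.Chain' Aug := himp (chain_R G)
  have cDT : (G.leftV.drop a ++ [G.t]).Chain' Aug := by
    refine himp ((chain_L_t G).suffix ?_)
    rw [← List.drop_append_of_le_length (show a ≤ G.leftV.length from ha)]
    exact List.drop_suffix _ _
  rw [hamL]
  unfold List.Chain'; rw [List.isChain_append]
  refine ⟨cA, ?_, ?_⟩
  · rw [List.isChain_append]
    refine ⟨cR, cDT, ?_⟩
    intro x hx y hy
    rw [R_last G hm] at hx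
    rw [Option.mem_some_iff] at hx
    subst hx
    rcases Nat.lt_or_ge a (kk G) with hlt | hge
    · rw [dropL_head G hlt, Option.mem_some_iff] at hy
      subst hy
      right
      rw [PsetL]
      rcases Nat.eq_zero_or_pos a with rfl | hpos
      · simp
      · rw [if_neg (by omega), if_neg (by omega)]
        simp
    · have hak : a = kk G := by omega
      subst hak
      rw [show List.drop (kk G) G.leftV = [] from by
        rw [show kk G = G.leftV.length from rfl, List.drop_length]] at hy
      simp only [List.nil_append, List.head?_cons, Option.mem_some_iff] at hy
      subst hy
      exact Or.inl (E_rm_t G hm)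
  · intro x hx y hy
    rw [R_head G hm] at hy
    rw [Option.mem_some_iff] at hy
    subst hy
    rcases Nat.eq_zero_or_pos a with rfl | hpos
    · simp only [List.take_zero, List.getLast?_singleton, Option.mem_some_iff] at hx
      subst hx
      exact Or.inl (E_s_r1 G hm)
    · rw [takeL_last G hpos ha, Option.mem_some_iff] at hx
      subst hx
      right
      rw [PsetL, if_neg (by omega)]
      rcases Nat.lt_or_ge a (kk G) with hlt | hge
      · rw [if_neg (by omega)]
        simp
      · have hak : a = kk G := by omega
        rw [if_pos hak, hak]
        simp

lemma hamR_chain (hk : 1 ≤ kk G) (hm : 1 ≤ mm G) {b : ℕ} (hb1 : 1 ≤ b) (hb2 : b + 1 ≤ mm G) :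
    (hamR G b).Chain' (G.AugE (PsetR G b)) := by
  set Aug := G.AugE (PsetR G b) with hAug
  have himp : ∀ {l : List V}, l.Chain' G.E → l.Chain' Aug :=
    fun hc => hc.imp (fun _ _ h => Or.inl h)
  have cA : (G.s :: G.rightV.take b).Chain' Aug := by
    refine himp (((rchain_chain G).prefix (List.prefix_append _ _)).prefix ?_)
    rw [show G.s :: G.rightV.take b = (G.s :: G.rightV).take (b+1) from rfl]
    exact List.take_prefix _ _
  have cL : G.leftV.Chain' Aug := himp (chain_L G)
  have cDT : (G.rightV.drop b ++ [G.t]).Chain' Aug := by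
    refine himp ((chain_R_t G).suffix ?_)
    rw [← List.drop_append_of_le_length (show b ≤ G.rightV.length from by
      have hlen : G.rightV.length = mm G := rfl; omega)]
    exact List.drop_suffix _ _
  rw [hamR]
  unfold List.Chain'; rw [List.isChain_append]
  refine ⟨cA, ?_, ?_⟩
  · rw [List.isChain_append]
    refine ⟨cL, cDT, ?_⟩
    intro x hx y hy
    rw [L_last G hk, Option.mem_some_iff] at hx
    subst hx
    rw [dropR_head G (by omega), Option.mem_some_iff] at hy
    subst hy
    right
    rw [PsetR]
    simp
  · intro x hx y hy
    rw [L_head G hk, Option.mem_some_iff] at hy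
    subst hy
    rw [takeR_last G hb1 (by omega), Option.mem_some_iff] at hx
    subst hx
    right
    rw [PsetR]
    simp

end StP
namespace StP
variable {V : Type} [Fintype V] [DecidableEq V] (G : OuterStDigraph V)

lemma aug_rank_L (hpoly : G.IsStPolygon) (hk : 1 ≤ kk G) (hm : 1 ≤ mm G) {a : ℕ} (ha : a ≤ kk G) :
    ∀ u v, G.AugE (PsetL G a) u v → rnkL G a (pos G u) < rnkL G a (pos G v) := by
  have hkm : nn G = kk G + mm G + 2 := rfl
  intro u v h
  rcases h with hE | hP
  · rcases classify G hpoly hE with ⟨h1, h2⟩ | ⟨h1, h2, h3⟩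
    · exact rnkL_lt_left G ha h1 h2
    · exact rnkL_lt_right G ha (pos_lt G _) (pos_lt G _) h1 h2 h3
  · rw [PsetL] at hP
    split_ifs at hP with h0 hkk
    · subst h0
      simp only [Finset.mem_singleton, Prod.mk.injEq] at hP
      obtain ⟨rfl, rfl⟩ := hP
      rw [pos_rv G hm le_rfl, pos_lv G le_rfl hk]
      unfold rnkL; split_ifs <;> omega
    · simp only [Finset.mem_singleton, Prod.mk.injEq] at hP
      obtain ⟨rfl, rfl⟩ := hP
      rw [pos_lv G hk le_rfl, pos_rv G le_rfl hm]
      unfold rnkL; split_ifs <;> omega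
    · simp only [Finset.mem_insert, Finset.mem_singleton, Prod.mk.injEq] at hP
      rcases hP with ⟨hu, hv⟩ | ⟨hu, hv⟩
      · subst hu; subst hv
        rw [pos_lv G (by omega) (by omega), pos_rv G le_rfl hm]
        unfold rnkL; split_ifs <;> omega
      · subst hu; subst hv
        rw [pos_rv G hm le_rfl, pos_lv G (by omega) (by omega)]
        unfold rnkL; split_ifs <;> omega

lemma aug_rank_R (hpoly : G.IsStPolygon) (hk : 1 ≤ kk G) (hm : 1 ≤ mm G) {b : ℕ}
    (hb1 : 1 ≤ b) (hb2 : b + 1 ≤ mm G) :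
    ∀ u v, G.AugE (PsetR G b) u v → rnkR G b (pos G u) < rnkR G b (pos G v) := by
  have hkm : nn G = kk G + mm G + 2 := rfl
  intro u v h
  rcases h with hE | hP
  · rcases classify G hpoly hE with ⟨h1, h2⟩ | ⟨h1, h2, h3⟩
    · exact rnkR_lt_left G hb1 hb2 h1 h2
    · exact rnkR_lt_right G hb1 hb2 (pos_lt G _) (pos_lt G _) h1 h2 h3
  · rw [PsetR] at hP
    simp only [Finset.mem_insert, Finset.mem_singleton, Prod.mk.injEq] at hP
    rcases hP with ⟨hu, hv⟩ | ⟨hu, hv⟩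
    · subst hu; subst hv
      rw [pos_rv G hb1 (by omega), pos_lv G le_rfl hk]
      unfold rnkR
      have h5 : nn G - (nn G - b) = b := by omega
      split_ifs <;> first | omega | exact (‹False›).elim
    · subst hu; subst hv
      rw [pos_lv G hk le_rfl, pos_rv G (by omega) (by omega)]
      unfold rnkR
      have h5 : nn G - (nn G - (b+1)) = b + 1 := by omega
      split_ifs <;> first | omega | exact (‹False›).elim

lemma isCompletion_L (hpoly : G.IsStPolygon) (hk : 1 ≤ kk G) (hm : 1 ≤ mm G) {a : ℕ}
    (ha : a ≤ kk G) : G.IsCompletion (PsetL G a) := by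
  refine ⟨?_, ?_, ⟨hamL G a, ?_, ?_, hamL_chain G hk hm ha⟩⟩
  · intro e he
    rw [PsetL] at he
    have hnew : ∀ i j, 1 ≤ i → i ≤ kk G → 1 ≤ j → j ≤ mm G →
        (¬ G.E (lv G i) (rv G j) ∧ lv G i ≠ rv G j) ∧
        (¬ G.E (rv G j) (lv G i) ∧ rv G j ≠ lv G i) := by
      intro i j h1 h2 h3 h4
      refine ⟨⟨?_, lv_ne_rv G h1 h2 h3 h4⟩, ?_, (lv_ne_rv G h1 h2 h3 h4).symm⟩
      · intro hE; exact (hpoly.2 _ _ hE).1 ⟨lv_mem G h1 h2, rv_mem G h3 h4⟩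
      · intro hE; exact (hpoly.2 _ _ hE).2 ⟨rv_mem G h3 h4, lv_mem G h1 h2⟩
    split_ifs at he with h0 hkk
    · simp only [Finset.mem_singleton] at he
      subst he
      exact (hnew 1 (mm G) le_rfl hk hm le_rfl).2
    · simp only [Finset.mem_singleton] at he
      subst he
      exact (hnew (kk G) 1 hk le_rfl le_rfl hm).1
    · simp only [Finset.mem_insert, Finset.mem_singleton] at he
      rcases he with rfl | rfl
      · exact (hnew a 1 (by omega) (by omega) le_rfl hm).1
      · exact (hnew (a+1) (mm G) (by omega) (by omega) hm le_rfl).2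
  · exact acyclic_of_rank (fun v => rnkL G a (pos G v)) (aug_rank_L G hpoly hk hm ha)
  · exact (hamL_perm G ha).nodup_iff.mpr G.nodup
  · exact fun v => (hamL_perm G ha).mem_iff.mpr (G.cover v)

lemma isCompletion_R (hpoly : G.IsStPolygon) (hk : 1 ≤ kk G) (hm : 1 ≤ mm G) {b : ℕ}
    (hb1 : 1 ≤ b) (hb2 : b + 1 ≤ mm G) : G.IsCompletion (PsetR G b) := by
  refine ⟨?_, ?_, ⟨hamR G b, ?_, ?_, hamR_chain G hk hm hb1 hb2⟩⟩
  · intro e he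
    rw [PsetR] at he
    simp only [Finset.mem_insert, Finset.mem_singleton] at he
    rcases he with rfl | rfl
    · refine ⟨?_, (lv_ne_rv G le_rfl hk hb1 (by omega)).symm⟩
      intro hE; exact (hpoly.2 _ _ hE).2 ⟨rv_mem G hb1 (by omega), lv_mem G le_rfl hk⟩
    · refine ⟨?_, lv_ne_rv G hk le_rfl (by omega) (by omega)⟩
      intro hE; exact (hpoly.2 _ _ hE).1 ⟨lv_mem G hk le_rfl, rv_mem G (by omega) (by omega)⟩
  · exact acyclic_of_rank (fun v => rnkR G b (pos G v)) (aug_rank_R G hpoly hk hm hb1 hb2)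
  · exact (hamR_perm G (by omega)).nodup_iff.mpr G.nodup
  · exact fun v => (hamR_perm G (by omega)).mem_iff.mpr (G.cover v)

lemma card_PsetL {a : ℕ} : (PsetL G a).card ≤ 2 := by
  rw [PsetL]
  split_ifs <;> first
    | simp
    | exact (Finset.card_insert_le _ _).trans (by simp)

lemma card_PsetR {b : ℕ} : (PsetR G b).card ≤ 2 := by
  rw [PsetR]
  exact (Finset.card_insert_le _ _).trans (by simp)

/- chord positions of the candidate edges -/
lemma chordAt_lr {i j : ℕ} (h1 : 1 ≤ i) (h2 : i ≤ kk G) (h3 : 1 ≤ j) (h4 : j ≤ mm G) :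
    ChordAt G (lv G i, rv G j) i j :=
  Or.inl ⟨pos_lv G h1 h2, pos_rv G h3 h4⟩

lemma chordAt_rl {i j : ℕ} (h1 : 1 ≤ i) (h2 : i ≤ kk G) (h3 : 1 ≤ j) (h4 : j ≤ mm G) :
    ChordAt G (rv G j, lv G i) i j :=
  Or.inr ⟨pos_rv G h3 h4, pos_lv G h1 h2⟩

/- crossing cost of the candidates -/
lemma cost_L0 (hpoly : G.IsStPolygon) (hk : 1 ≤ kk G) (hm : 1 ≤ mm G) :
    G.crossNum (PsetL G 0) + (Msp G).ncard = (LSp G 1).ncard + (RSp G (mm G)).ncard := by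
  rw [crossNum_eq_sum, PsetL, if_pos rfl, Finset.sum_singleton]
  exact nS_add G hpoly (chordAt_rl G le_rfl hk hm le_rfl) le_rfl hk hm le_rfl

lemma cost_Lk (hpoly : G.IsStPolygon) (hk : 1 ≤ kk G) (hm : 1 ≤ mm G) :
    G.crossNum (PsetL G (kk G)) + (Msp G).ncard = (LSp G (kk G)).ncard + (RSp G 1).ncard := by
  rw [crossNum_eq_sum, PsetL, if_neg (by omega), if_pos rfl, Finset.sum_singleton]
  exact nS_add G hpoly (chordAt_lr G hk le_rfl le_rfl hm) hk le_rfl le_rfl hm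

lemma cost_Lmid (hpoly : G.IsStPolygon) (hk : 1 ≤ kk G) (hm : 1 ≤ mm G) {a : ℕ}
    (ha1 : 1 ≤ a) (ha2 : a + 1 ≤ kk G) :
    G.crossNum (PsetL G a) + 2 * (Msp G).ncard =
      (LSp G a).ncard + (RSp G 1).ncard + ((LSp G (a+1)).ncard + (RSp G (mm G)).ncard) := by
  rw [crossNum_eq_sum, PsetL, if_neg (by omega), if_neg (by omega),
    Finset.sum_pair (by
      intro h
      exact lv_ne_rv G ha1 (by omega) hm le_rfl (congrArg Prod.fst h))]
  have e1 := nS_add G hpoly (chordAt_lr G ha1 (by omega) le_rfl hm) ha1 (by omega) le_rfl hm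
  have e2 := nS_add G hpoly (chordAt_rl G (by omega) ha2 hm le_rfl) (by omega) ha2 hm le_rfl
  omega

lemma cost_R (hpoly : G.IsStPolygon) (hk : 1 ≤ kk G) (hm : 1 ≤ mm G) {b : ℕ}
    (hb1 : 1 ≤ b) (hb2 : b + 1 ≤ mm G) :
    G.crossNum (PsetR G b) + 2 * (Msp G).ncard =
      (LSp G 1).ncard + (RSp G b).ncard + ((LSp G (kk G)).ncard + (RSp G (b+1)).ncard) := by
  rw [crossNum_eq_sum, PsetR,
    Finset.sum_pair (by
      intro h
      exact (lv_ne_rv G hk le_rfl hb1 (by omega)).symm (congrArg Prod.fst h))]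
  have e1 := nS_add G hpoly (chordAt_rl G le_rfl hk hb1 (by omega)) le_rfl hk hb1 (by omega)
  have e2 := nS_add G hpoly (chordAt_lr G hk le_rfl (by omega) hb2) hk le_rfl (by omega) hb2
  omega

end StP
namespace StP
variable {V : Type} [Fintype V] [DecidableEq V] (G : OuterStDigraph V)

lemma ham_len {l : List V} (hno : l.Nodup) (hmem : ∀ v : V, v ∈ l) : l.length = nn G := by
  have h1 : l.toFinset = Finset.univ := Finset.eq_univ_iff_forall.mpr (by simp [hmem])
  have h2 : (G.cyc).toFinset = Finset.univ := Finset.eq_univ_iff_forall.mpr (by simp [mem_cyc])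
  have e1 : l.length = (Finset.univ : Finset V).card := by
    rw [← h1, List.card_toFinset, List.dedup_eq_self.mpr hno]
  have e2 : (G.cyc).length = (Finset.univ : Finset V).card := by
    rw [← h2, List.card_toFinset, List.dedup_eq_self.mpr (nodup_cyc G)]
  rw [e1, ← e2, len_cyc]

section Anal

variable {Q : Finset (V × V)} {l : List V}

lemma aug_ne (hQ1 : ∀ e ∈ Q, ¬ G.E e.1 e.2 ∧ e.1 ≠ e.2) {u v : V}
    (h : G.AugE Q u v) : u ≠ v := by
  rcases h with h | h
  · exact G.no_loops _ _ h
  · exact (hQ1 _ h).2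

lemma idx_lt_len (hmem : ∀ v : V, v ∈ l) (v : V) : l.idxOf v < l.length :=
  List.idxOf_lt_length_iff.mpr (hmem v)

lemma getElem_idx (hmem : ∀ v : V, v ∈ l) (v : V) :
    l[l.idxOf v]'(idx_lt_len hmem v) = v :=
  List.getElem_idxOf (idx_lt_len hmem v)

lemma idx_inj (hmem : ∀ v : V, v ∈ l) {u v : V} (h : l.idxOf u = l.idxOf v) : u = v :=
  (List.idxOf_inj (hmem u)).mp h

lemma forward (hQ1 : ∀ e ∈ Q, ¬ G.E e.1 e.2 ∧ e.1 ≠ e.2)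
    (hacyc : AcyclicRel (G.AugE Q)) (hno : l.Nodup) (hmem : ∀ v : V, v ∈ l)
    (hch : l.Chain' (G.AugE Q)) {u v : V} (h : G.AugE Q u v) :
    l.idxOf u < l.idxOf v := by
  rcases Nat.lt_trichotomy (l.idxOf u) (l.idxOf v) with h1 | h1 | h1
  · exact h1
  · exact absurd (idx_inj hmem h1) (aug_ne G hQ1 h)
  · exfalso
    have htg := chain'_transGen hch h1 (idx_lt_len hmem u)
    rw [getElem_idx hmem, getElem_idx hmem] at htg
    exact hacyc u ((Relation.TransGen.single h).trans htg)

lemma forward_trans (hQ1 : ∀ e ∈ Q, ¬ G.E e.1 e.2 ∧ e.1 ≠ e.2)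
    (hacyc : AcyclicRel (G.AugE Q)) (hno : l.Nodup) (hmem : ∀ v : V, v ∈ l)
    (hch : l.Chain' (G.AugE Q)) {u v : V} (h : Relation.TransGen (G.AugE Q) u v) :
    l.idxOf u < l.idxOf v := by
  induction h with
  | single h1 => exact forward G hQ1 hacyc hno hmem hch h1
  | tail _ h2 ih => exact lt_trans ih (forward G hQ1 hacyc hno hmem hch h2)

lemma forwardE (hQ1 : ∀ e ∈ Q, ¬ G.E e.1 e.2 ∧ e.1 ≠ e.2)
    (hacyc : AcyclicRel (G.AugE Q)) (hno : l.Nodup) (hmem : ∀ v : V, v ∈ l)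
    (hch : l.Chain' (G.AugE Q)) {u v : V} (h : Relation.TransGen G.E u v) :
    l.idxOf u < l.idxOf v :=
  forward_trans G hQ1 hacyc hno hmem hch (Relation.TransGen.mono (fun _ _ hh => Or.inl hh) _ _ h)

lemma idx_s_eq (hQ1 : ∀ e ∈ Q, ¬ G.E e.1 e.2 ∧ e.1 ≠ e.2)
    (hacyc : AcyclicRel (G.AugE Q)) (hno : l.Nodup) (hmem : ∀ v : V, v ∈ l)
    (hch : l.Chain' (G.AugE Q)) : l.idxOf G.s = 0 := by
  by_contra hc
  have hlen : 0 < l.length := lt_of_le_of_lt (Nat.zero_le _) (idx_lt_len hmem G.s)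
  have h0 : l[0]'hlen ≠ G.s := by
    intro h
    exact hc (by rw [← h, List.Nodup.idxOf_getElem hno])
  have := forwardE G hQ1 hacyc hno hmem hch (reach_from_s G h0)
  rw [List.Nodup.idxOf_getElem hno] at this
  omega

lemma idx_t_eq (hQ1 : ∀ e ∈ Q, ¬ G.E e.1 e.2 ∧ e.1 ≠ e.2)
    (hacyc : AcyclicRel (G.AugE Q)) (hno : l.Nodup) (hmem : ∀ v : V, v ∈ l)
    (hch : l.Chain' (G.AugE Q)) : l.idxOf G.t = l.length - 1 := by
  have hlen : 0 < l.length := lt_of_le_of_lt (Nat.zero_le _) (idx_lt_len hmem G.t)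
  by_contra hc
  have h0 : l[l.length - 1]'(by omega) ≠ G.t := by
    intro h
    exact hc (by rw [← h, List.Nodup.idxOf_getElem hno])
  have := forwardE G hQ1 hacyc hno hmem hch (reach_to_t G h0)
  rw [List.Nodup.idxOf_getElem hno] at this
  have := idx_lt_len hmem G.t
  omega

lemma pred_spec (hno : l.Nodup) (hmem : ∀ v : V, v ∈ l)
    (hch : l.Chain' (G.AugE Q)) {v : V} (h : 0 < l.idxOf v) :
    G.AugE Q (l[l.idxOf v - 1]'(by have := idx_lt_len hmem v; omega)) v ∧
      l.idxOf (l[l.idxOf v - 1]'(by have := idx_lt_len hmem v; omega)) = l.idxOf v - 1 := by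
  have hlt := idx_lt_len hmem v
  constructor
  · have := List.isChain_iff_getElem.mp hch (l.idxOf v - 1) (by omega)
    have heq : l.idxOf v - 1 + 1 = l.idxOf v := by omega
    simp only [heq] at this
    rwa [getElem_idx hmem] at this
  · exact List.Nodup.idxOf_getElem hno _ _

lemma succ_spec (hno : l.Nodup) (hmem : ∀ v : V, v ∈ l)
    (hch : l.Chain' (G.AugE Q)) {v : V} (h : l.idxOf v + 1 < l.length) :
    G.AugE Q v (l[l.idxOf v + 1]'h) ∧
      l.idxOf (l[l.idxOf v + 1]'h) = l.idxOf v + 1 := by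
  constructor
  · have := List.isChain_iff_getElem.mp hch (l.idxOf v) (by omega)
    rwa [getElem_idx hmem] at this
  · exact List.Nodup.idxOf_getElem hno _ _

end Anal
end StP
namespace StP
variable {V : Type} [Fintype V] [DecidableEq V] (G : OuterStDigraph V)

lemma crossNum_triple {e f g : V × V} (h1 : e ≠ f) (h2 : e ≠ g) (h3 : f ≠ g) :
    G.crossNum {e, f, g} =
      (Sset G e).ncard + ((Sset G f).ncard + (Sset G g).ncard) := by
  rw [crossNum_eq_sum, Finset.sum_insert (by simp [h1, h2]), Finset.sum_pair h3]

lemma crossNum_pair' {e f : V × V} (h1 : e ≠ f) :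
    G.crossNum {e, f} = (Sset G e).ncard + (Sset G f).ncard := by
  rw [crossNum_eq_sum, Finset.sum_pair h1]

lemma exists_small (hpoly : G.IsStPolygon) (hk : 1 ≤ kk G) (hm : 1 ≤ mm G)
    {Q : Finset (V × V)} (hQ : G.IsCompletion Q) :
    ∃ P : Finset (V × V), G.IsCompletion P ∧ P.card ≤ 2 ∧ G.crossNum P ≤ G.crossNum Q := by
  obtain ⟨hQ1, hacyc, l, hno, hmem, hch⟩ := hQ
  have hkm : nn G = kk G + mm G + 2 := rfl
  have hlen : l.length = nn G := ham_len G hno hmem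
  have hilt : ∀ v : V, l.idxOf v < nn G := fun v => hlen ▸ idx_lt_len hmem v
  have hinj : ∀ {u v : V}, l.idxOf u = l.idxOf v → u = v := fun h => idx_inj hmem h
  have hfwE : ∀ {u v : V}, Relation.TransGen G.E u v → l.idxOf u < l.idxOf v :=
    fun h => forwardE G hQ1 hacyc hno hmem hch h
  have hs0 : l.idxOf G.s = 0 := idx_s_eq G hQ1 hacyc hno hmem hch
  have ht0 : l.idxOf G.t = nn G - 1 := by rw [idx_t_eq G hQ1 hacyc hno hmem hch, hlen]
  have hlv_lt : ∀ {i j : ℕ}, 1 ≤ i → i < j → j ≤ kk G →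
      l.idxOf (lv G i) < l.idxOf (lv G j) := fun h1 h2 h3 => hfwE (trans_lv G h1 h2 h3)
  have hrv_lt : ∀ {i j : ℕ}, 1 ≤ i → i < j → j ≤ mm G →
      l.idxOf (rv G i) < l.idxOf (rv G j) := fun h1 h2 h3 => hfwE (trans_rv G h1 h2 h3)
  have hpne : ∀ {u v : V}, pos G u ≠ pos G v → u ≠ v := fun h he => h (by rw [he])
  have hlv_ne_s : ∀ {i : ℕ}, 1 ≤ i → i ≤ kk G → lv G i ≠ G.s :=
    fun h1 h2 => hpne (by rw [pos_lv G h1 h2, pos_s]; omega)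
  have hlv_ne_t : ∀ {i : ℕ}, 1 ≤ i → i ≤ kk G → lv G i ≠ G.t :=
    fun h1 h2 => hpne (by rw [pos_lv G h1 h2, pos_t]; omega)
  have hrv_ne_s : ∀ {j : ℕ}, 1 ≤ j → j ≤ mm G → rv G j ≠ G.s :=
    fun h1 h2 => hpne (by rw [pos_rv G h1 h2, pos_s]; omega)
  have hrv_ne_t : ∀ {j : ℕ}, 1 ≤ j → j ≤ mm G → rv G j ≠ G.t :=
    fun h1 h2 => hpne (by rw [pos_rv G h1 h2, pos_t]; omega)
  have hlv_inj : ∀ {i j : ℕ}, 1 ≤ i → i ≤ kk G → 1 ≤ j → j ≤ kk G → lv G i = lv G j → i = j := by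
    intro i j h1 h2 h3 h4 h
    have hx := pos_lv G h1 h2
    rw [h, pos_lv G h3 h4] at hx
    omega
  have hrv_inj : ∀ {i j : ℕ}, 1 ≤ i → i ≤ mm G → 1 ≤ j → j ≤ mm G → rv G i = rv G j → i = j := by
    intro i j h1 h2 h3 h4 h
    have hx := pos_rv G h1 h2
    rw [h, pos_rv G h3 h4] at hx
    omega
  have pred_of : ∀ v : V, 0 < l.idxOf v →
      ∃ p : V, G.AugE Q p v ∧ l.idxOf p = l.idxOf v - 1 :=
    fun v h => ⟨_, (pred_spec G hno hmem hch h).1, (pred_spec G hno hmem hch h).2⟩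
  have succ_of : ∀ v : V, l.idxOf v < nn G - 1 →
      ∃ w : V, G.AugE Q v w ∧ l.idxOf w = l.idxOf v + 1 := by
    intro v h
    have hb : l.idxOf v + 1 < l.length := by omega
    exact ⟨_, (succ_spec G hno hmem hch hb).1, (succ_spec G hno hmem hch hb).2⟩
  have memQ_lr : ∀ {i j : ℕ}, 1 ≤ i → i ≤ kk G → 1 ≤ j → j ≤ mm G →
      G.AugE Q (lv G i) (rv G j) → (lv G i, rv G j) ∈ Q := by
    rintro i j h1 h2 h3 h4 (hE | hq)
    · exact absurd ⟨lv_mem G h1 h2, rv_mem G h3 h4⟩ (hpoly.2 _ _ hE).1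
    · exact hq
  have memQ_rl : ∀ {i j : ℕ}, 1 ≤ i → i ≤ kk G → 1 ≤ j → j ≤ mm G →
      G.AugE Q (rv G j) (lv G i) → (rv G j, lv G i) ∈ Q := by
    rintro i j h1 h2 h3 h4 (hE | hq)
    · exact absurd ⟨rv_mem G h3 h4, lv_mem G h1 h2⟩ (hpoly.2 _ _ hE).2
    · exact hq
  -- predecessor of r1
  have hr1pos : 0 < l.idxOf (rv G 1) := by
    rcases Nat.eq_zero_or_pos (l.idxOf (rv G 1)) with h | h
    · exact absurd (hinj (h.trans hs0.symm)) (hrv_ne_s le_rfl hm)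
    · exact h
  obtain ⟨p, hpE, hpidx⟩ := pred_of (rv G 1) hr1pos
  rcases vertex_cases G p with rfl | rfl | ⟨a, ha1, ha2, rfl⟩ | ⟨j, hj1, hj2, rfl⟩
  · -- CASE B : pred of r1 is s
    have hr1idx : l.idxOf (rv G 1) = 1 := by rw [hs0] at hpidx; omega
    have hl1pos : 0 < l.idxOf (lv G 1) := by
      rcases Nat.eq_zero_or_pos (l.idxOf (lv G 1)) with h | h
      · exact absurd (hinj (h.trans hs0.symm)) (hlv_ne_s le_rfl hk)
      · exact h
    obtain ⟨q, hqE, hqidx⟩ := pred_of (lv G 1) hl1pos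
    have hq_ne_s : q ≠ G.s := by
      intro h
      rw [h, hs0] at hqidx
      have hx : l.idxOf (lv G 1) = 1 := by omega
      exact lv_ne_rv G le_rfl hk le_rfl hm (hinj (hx.trans hr1idx.symm))
    have hq_ne_t : q ≠ G.t := by
      intro h
      rw [h, ht0] at hqidx
      have := hilt (lv G 1)
      omega
    have hq_rv : ∃ b, 1 ≤ b ∧ b ≤ mm G ∧ q = rv G b := by
      rcases vertex_cases G q with rfl | rfl | ⟨j, hj1, hj2, rfl⟩ | ⟨b, hb1, hb2, rfl⟩
      · exact absurd rfl hq_ne_s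
      · exact absurd rfl hq_ne_t
      · exfalso
        rcases Nat.lt_or_ge 1 j with h | h
        · have := hlv_lt le_rfl h hj2
          omega
        · have hj : j = 1 := by omega
          subst hj
          omega
      · exact ⟨b, hb1, hb2, rfl⟩
    obtain ⟨b, hb1, hb2, rfl⟩ := hq_rv
    have he1 : (rv G b, lv G 1) ∈ Q := memQ_rl le_rfl hk hb1 hb2 hqE
    by_cases hbm : b = mm G
    · subst hbm
      refine ⟨PsetL G 0, isCompletion_L G hpoly hk hm (Nat.zero_le _), card_PsetL G,
        crossNum_mono G ?_⟩
      rw [PsetL, if_pos rfl]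
      simpa using he1
    · have hbm' : b + 1 ≤ mm G := by omega
      have hpos2 : 0 < l.idxOf (rv G (b+1)) := by
        rcases Nat.eq_zero_or_pos (l.idxOf (rv G (b+1))) with h | h
        · exact absurd (hinj (h.trans hs0.symm)) (hrv_ne_s (by omega) hbm')
        · exact h
      obtain ⟨u, huE, huidx⟩ := pred_of (rv G (b+1)) hpos2
      have hu_lv : ∃ a', 1 ≤ a' ∧ a' ≤ kk G ∧ u = lv G a' := by
        rcases vertex_cases G u with rfl | rfl | ⟨c, hc1, hc2, rfl⟩ | ⟨j, hj1, hj2, rfl⟩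
        · exfalso
          rw [hs0] at huidx
          have h1 : l.idxOf (rv G (b+1)) = 1 := by omega
          have h2 : rv G (b+1) = rv G 1 := hinj (h1.trans hr1idx.symm)
          have := hrv_inj (by omega) hbm' le_rfl hm h2
          omega
        · exfalso
          rw [ht0] at huidx
          have := hilt (rv G (b+1))
          have h4 : 4 ≤ nn G := by omega
          omega
        · exact ⟨c, hc1, hc2, rfl⟩
        · exfalso
          rcases Nat.lt_trichotomy j b with h | h | h
          · have l1 := hrv_lt hj1 h hb2
            have l2 := hrv_lt hb1 (show b < b+1 by omega) hbm'
            omega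
          · rw [h] at huidx
            have hx : l.idxOf (lv G 1) = l.idxOf (rv G (b+1)) := by omega
            exact lv_ne_rv G le_rfl hk (by omega) hbm' (hinj hx)
          · rcases Nat.lt_or_ge (b+1) j with h' | h'
            · have := hrv_lt (by omega) h' hj2
              omega
            · have hj : j = b + 1 := by omega
              subst hj
              omega
      obtain ⟨a', ha'1, ha'2, rfl⟩ := hu_lv
      have he5 : (lv G a', rv G (b+1)) ∈ Q := memQ_lr ha'1 ha'2 (by omega) hbm' huE
      have hlkpos : l.idxOf (lv G (kk G)) < nn G - 1 := by
        have h1 := hilt (lv G (kk G))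
        have h2 : l.idxOf (lv G (kk G)) ≠ nn G - 1 := by
          intro h
          exact hlv_ne_t hk le_rfl (hinj (h.trans ht0.symm))
        omega
      obtain ⟨w, hwE, hwidx⟩ := succ_of (lv G (kk G)) hlkpos
      have hw_ne_s : w ≠ G.s := fun h => by rw [h, hs0] at hwidx; omega
      have hw_not_lv : ∀ j, 1 ≤ j → j ≤ kk G → w ≠ lv G j := by
        intro j h1 h2 h
        subst h
        rcases Nat.lt_or_ge j (kk G) with h' | h'
        · have := hlv_lt h1 h' le_rfl
          omega
        · have hx : j = kk G := by omega
          subst hx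
          omega
      rcases vertex_cases G w with rfl | rfl | ⟨c, hc1, hc2, rfl⟩ | ⟨b'', hb''1, hb''2, rfl⟩
      · exact absurd rfl hw_ne_s
      · -- B2b : succ lk = t ; look at succ of rm
        have hrmpos : l.idxOf (rv G (mm G)) < nn G - 1 := by
          have h1 := hilt (rv G (mm G))
          have h2 : l.idxOf (rv G (mm G)) ≠ nn G - 1 :=
            fun h => hrv_ne_t hm le_rfl (hinj (h.trans ht0.symm))
          omega
        obtain ⟨w2, hw2E, hw2idx⟩ := succ_of (rv G (mm G)) hrmpos
        have hw2_ne_t : w2 ≠ G.t := by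
          intro h
          rw [h, ht0] at hw2idx
          rw [ht0] at hwidx
          exact lv_ne_rv G hk le_rfl hm le_rfl
            (hinj (show l.idxOf (lv G (kk G)) = l.idxOf (rv G (mm G)) by omega))
        have hw2_ne_s : w2 ≠ G.s := fun h => by rw [h, hs0] at hw2idx; omega
        have hw2_not_rv : ∀ j, 1 ≤ j → j ≤ mm G → w2 ≠ rv G j := by
          intro j h1 h2 h
          subst h
          rcases Nat.lt_or_ge j (mm G) with h' | h'
          · have := hrv_lt h1 h' le_rfl
            omega
          · have hx : j = mm G := by omega
            subst hx
            omega
        have hw2_lv : ∃ c', 1 ≤ c' ∧ c' ≤ kk G ∧ w2 = lv G c' := by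
          rcases vertex_cases G w2 with rfl | rfl | ⟨c', hc'1, hc'2, rfl⟩ | ⟨j, hj1, hj2, rfl⟩
          · exact absurd rfl hw2_ne_s
          · exact absurd rfl hw2_ne_t
          · exact ⟨c', hc'1, hc'2, rfl⟩
          · exact absurd rfl (hw2_not_rv j hj1 hj2)
        obtain ⟨c', hc'1, hc'2, rfl⟩ := hw2_lv
        have he7 : (rv G (mm G), lv G c') ∈ Q := memQ_rl hc'1 hc'2 hm le_rfl hw2E
        have hne : (rv G b, lv G 1) ≠ (rv G (mm G), lv G c') := by
          intro h
          have := hrv_inj hb1 hb2 hm le_rfl (congrArg Prod.fst h)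
          omega
        have hsub : ({(rv G b, lv G 1), (rv G (mm G), lv G c')} : Finset (V × V)) ⊆ Q :=
          Finset.insert_subset he1 (by simpa using he7)
        have hQge := crossNum_mono G hsub
        have hpair := crossNum_pair' G hne
        have c1 := nS_add G hpoly (chordAt_rl G le_rfl hk hb1 hb2) le_rfl hk hb1 hb2
        have c7 := nS_add G hpoly (chordAt_rl G hc'1 hc'2 hm le_rfl) hc'1 hc'2 hm le_rfl
        have tL0 := cost_L0 G hpoly hk hm
        have m1 := M_le_RSp G hb1 hb2
        have m2 := M_le_LSp G hc'1 hc'2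
        exact ⟨PsetL G 0, isCompletion_L G hpoly hk hm (Nat.zero_le _), card_PsetL G, by omega⟩
      · exact absurd rfl (hw_not_lv c hc1 hc2)
      · -- w = rv b''
        have he6 : (lv G (kk G), rv G b'') ∈ Q := memQ_lr hk le_rfl hb''1 hb''2 hwE
        by_cases heq : (lv G a', rv G (b+1)) = (lv G (kk G), rv G b'')
        · have hsnd : rv G (b+1) = rv G b'' := congrArg Prod.snd heq
          have h2' : (lv G (kk G), rv G (b+1)) ∈ Q := by
            rw [← hsnd] at he6
            exact he6
          refine ⟨PsetR G b, isCompletion_R G hpoly hk hm hb1 hbm', card_PsetR G,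
            crossNum_mono G ?_⟩
          rw [PsetR]
          exact Finset.insert_subset he1 (by simpa using h2')
        · have hne15 : (rv G b, lv G 1) ≠ (lv G a', rv G (b+1)) :=
            fun h => lv_ne_rv G ha'1 ha'2 hb1 hb2 (congrArg Prod.fst h).symm
          have hne16 : (rv G b, lv G 1) ≠ (lv G (kk G), rv G b'') :=
            fun h => lv_ne_rv G hk le_rfl hb1 hb2 (congrArg Prod.fst h).symm
          have hsub : ({(rv G b, lv G 1), (lv G a', rv G (b+1)), (lv G (kk G), rv G b'')} :
              Finset (V × V)) ⊆ Q :=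
            Finset.insert_subset he1 (Finset.insert_subset he5 (by simpa using he6))
          have htr := crossNum_triple G hne15 hne16 heq
          have hQge := crossNum_mono G hsub
          have c1 := nS_add G hpoly (chordAt_rl G le_rfl hk hb1 hb2) le_rfl hk hb1 hb2
          have c5 := nS_add G hpoly (chordAt_lr G ha'1 ha'2 (by omega) hbm') ha'1 ha'2 (by omega) hbm'
          have c6 := nS_add G hpoly (chordAt_lr G hk le_rfl hb''1 hb''2) hk le_rfl hb''1 hb''2
          have tR := cost_R G hpoly hk hm hb1 hbm'
          have m1 := M_le_LSp G ha'1 ha'2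
          have m2 := M_le_RSp G hb''1 hb''2
          exact ⟨PsetR G b, isCompletion_R G hpoly hk hm hb1 hbm', card_PsetR G, by omega⟩
  · -- p = t : impossible
    exfalso
    rw [ht0] at hpidx
    have := hilt (rv G 1)
    have h4 : 4 ≤ nn G := by omega
    omega
  · -- CASE A : pred of r1 is lv a
    have he1 : (lv G a, rv G 1) ∈ Q := memQ_lr ha1 ha2 le_rfl hm hpE
    by_cases hak : a = kk G
    · subst hak
      refine ⟨PsetL G (kk G), isCompletion_L G hpoly hk hm le_rfl, card_PsetL G,
        crossNum_mono G ?_⟩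
      rw [PsetL, if_neg (by omega), if_pos rfl]
      simpa using he1
    · have hak' : a + 1 ≤ kk G := by omega
      have hrmpos : l.idxOf (rv G (mm G)) < nn G - 1 := by
        have h1 := hilt (rv G (mm G))
        have h2 : l.idxOf (rv G (mm G)) ≠ nn G - 1 :=
          fun h => hrv_ne_t hm le_rfl (hinj (h.trans ht0.symm))
        omega
      obtain ⟨w, hwE, hwidx⟩ := succ_of (rv G (mm G)) hrmpos
      have hw_ne_s : w ≠ G.s := fun h => by rw [h, hs0] at hwidx; omega
      have hw_not_rv : ∀ j, 1 ≤ j → j ≤ mm G → w ≠ rv G j := by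
        intro j h1 h2 h
        subst h
        rcases Nat.lt_or_ge j (mm G) with h' | h'
        · have := hrv_lt h1 h' le_rfl
          omega
        · have hx : j = mm G := by omega
          subst hx
          omega
      rcases vertex_cases G w with rfl | rfl | ⟨c, hc1, hc2, rfl⟩ | ⟨j, hj1, hj2, rfl⟩
      · exact absurd rfl hw_ne_s
      · -- A2a : succ rm = t ; succ of lk must be rv b'
        have hlkpos : l.idxOf (lv G (kk G)) < nn G - 1 := by
          have h1 := hilt (lv G (kk G))
          have h2 : l.idxOf (lv G (kk G)) ≠ nn G - 1 :=
            fun h => hlv_ne_t hk le_rfl (hinj (h.trans ht0.symm))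
          omega
        obtain ⟨u, huE, huidx⟩ := succ_of (lv G (kk G)) hlkpos
        have hu_ne_t : u ≠ G.t := by
          intro h
          rw [h, ht0] at huidx
          rw [ht0] at hwidx
          exact lv_ne_rv G hk le_rfl hm le_rfl
            (hinj (show l.idxOf (lv G (kk G)) = l.idxOf (rv G (mm G)) by omega))
        have hu_ne_s : u ≠ G.s := fun h => by rw [h, hs0] at huidx; omega
        have hu_not_lv : ∀ j, 1 ≤ j → j ≤ kk G → u ≠ lv G j := by
          intro j h1 h2 h
          subst h
          rcases Nat.lt_or_ge j (kk G) with h' | h'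
          · have := hlv_lt h1 h' le_rfl
            omega
          · have hx : j = kk G := by omega
            subst hx
            omega
        have hu_rv : ∃ b', 1 ≤ b' ∧ b' ≤ mm G ∧ u = rv G b' := by
          rcases vertex_cases G u with rfl | rfl | ⟨j, hj1, hj2, rfl⟩ | ⟨b', hb'1, hb'2, rfl⟩
          · exact absurd rfl hu_ne_s
          · exact absurd rfl hu_ne_t
          · exact absurd rfl (hu_not_lv j hj1 hj2)
          · exact ⟨b', hb'1, hb'2, rfl⟩
        obtain ⟨b', hb'1, hb'2, rfl⟩ := hu_rv
        have he2 : (lv G (kk G), rv G b') ∈ Q := memQ_lr hk le_rfl hb'1 hb'2 huE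
        have hne : (lv G a, rv G 1) ≠ (lv G (kk G), rv G b') := by
          intro h
          have := hlv_inj ha1 ha2 hk le_rfl (congrArg Prod.fst h)
          omega
        have hsub : ({(lv G a, rv G 1), (lv G (kk G), rv G b')} : Finset (V × V)) ⊆ Q :=
          Finset.insert_subset he1 (by simpa using he2)
        have hQge := crossNum_mono G hsub
        have hpair := crossNum_pair' G hne
        have c1 := nS_add G hpoly (chordAt_lr G ha1 ha2 le_rfl hm) ha1 ha2 le_rfl hm
        have c2 := nS_add G hpoly (chordAt_lr G hk le_rfl hb'1 hb'2) hk le_rfl hb'1 hb'2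
        have tLk := cost_Lk G hpoly hk hm
        have m1 := M_le_LSp G ha1 ha2
        have m2 := M_le_RSp G hb'1 hb'2
        exact ⟨PsetL G (kk G), isCompletion_L G hpoly hk hm le_rfl, card_PsetL G, by omega⟩
      · -- A2b : succ rm = lv c
        have he3 : (rv G (mm G), lv G c) ∈ Q := memQ_rl hc1 hc2 hm le_rfl hwE
        have hpos2 : 0 < l.idxOf (lv G (a+1)) := by
          rcases Nat.eq_zero_or_pos (l.idxOf (lv G (a+1))) with h | h
          · exact absurd (hinj (h.trans hs0.symm)) (hlv_ne_s (by omega) hak')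
          · exact h
        obtain ⟨u, huE, huidx⟩ := pred_of (lv G (a+1)) hpos2
        have hu_ne_s : u ≠ G.s := by
          intro h
          rw [h, hs0] at huidx
          have h1 : l.idxOf (lv G (a+1)) = 1 := by omega
          have h2 := hlv_lt ha1 (show a < a + 1 by omega) hak'
          have h3 : 0 < l.idxOf (lv G a) := by
            rcases Nat.eq_zero_or_pos (l.idxOf (lv G a)) with h' | h'
            · exact absurd (hinj (h'.trans hs0.symm)) (hlv_ne_s ha1 ha2)
            · exact h'
          omega
        have hu_ne_t : u ≠ G.t := by
          intro h
          rw [h, ht0] at huidx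
          have := hilt (lv G (a+1))
          have h4 : 4 ≤ nn G := by omega
          omega
        have hu_not_lv : ∀ j, 1 ≤ j → j ≤ kk G → u ≠ lv G j := by
          intro j h1 h2 h
          subst h
          rcases Nat.lt_trichotomy j a with h' | h' | h'
          · have l1 := hlv_lt h1 h' ha2
            have l2 := hlv_lt ha1 (show a < a+1 by omega) hak'
            omega
          · rw [h'] at huidx
            have hx : l.idxOf (rv G 1) = l.idxOf (lv G (a+1)) := by omega
            exact lv_ne_rv G (by omega) hak' le_rfl hm (hinj hx).symm
          · rcases Nat.lt_or_ge (a+1) j with h'' | h''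
            · have := hlv_lt (by omega) h'' h2
              omega
            · have hj : j = a + 1 := by omega
              subst hj
              omega
        have hu_rv : ∃ b, 1 ≤ b ∧ b ≤ mm G ∧ u = rv G b := by
          rcases vertex_cases G u with rfl | rfl | ⟨j, hj1, hj2, rfl⟩ | ⟨b, hb1, hb2, rfl⟩
          · exact absurd rfl hu_ne_s
          · exact absurd rfl hu_ne_t
          · exact absurd rfl (hu_not_lv j hj1 hj2)
          · exact ⟨b, hb1, hb2, rfl⟩
        obtain ⟨b, hb1, hb2, rfl⟩ := hu_rv
        have he4 : (rv G b, lv G (a+1)) ∈ Q := memQ_rl (by omega) hak' hb1 hb2 huE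
        by_cases heq : (rv G (mm G), lv G c) = (rv G b, lv G (a+1))
        · have hfst : rv G (mm G) = rv G b := congrArg Prod.fst heq
          have h2' : (rv G (mm G), lv G (a+1)) ∈ Q := by
            rw [hfst]
            exact he4
          refine ⟨PsetL G a, isCompletion_L G hpoly hk hm ha2, card_PsetL G,
            crossNum_mono G ?_⟩
          rw [PsetL, if_neg (by omega), if_neg hak]
          exact Finset.insert_subset he1 (by simpa using h2')
        · have hne13 : (lv G a, rv G 1) ≠ (rv G (mm G), lv G c) :=
            fun h => lv_ne_rv G ha1 ha2 hm le_rfl (congrArg Prod.fst h)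
          have hne14 : (lv G a, rv G 1) ≠ (rv G b, lv G (a+1)) :=
            fun h => lv_ne_rv G ha1 ha2 hb1 hb2 (congrArg Prod.fst h)
          have hsub : ({(lv G a, rv G 1), (rv G (mm G), lv G c), (rv G b, lv G (a+1))} :
              Finset (V × V)) ⊆ Q :=
            Finset.insert_subset he1 (Finset.insert_subset he3 (by simpa using he4))
          have htr := crossNum_triple G hne13 hne14 heq
          have hQge := crossNum_mono G hsub
          have c1 := nS_add G hpoly (chordAt_lr G ha1 ha2 le_rfl hm) ha1 ha2 le_rfl hm
          have c3 := nS_add G hpoly (chordAt_rl G hc1 hc2 hm le_rfl) hc1 hc2 hm le_rfl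
          have c4 := nS_add G hpoly (chordAt_rl G (by omega) hak' hb1 hb2) (by omega) hak' hb1 hb2
          have tmid := cost_Lmid G hpoly hk hm ha1 hak'
          have m1 := M_le_LSp G hc1 hc2
          have m2 := M_le_RSp G hb1 hb2
          exact ⟨PsetL G a, isCompletion_L G hpoly hk hm ha2, card_PsetL G, by omega⟩
      · exact absurd rfl (hw_not_rv j hj1 hj2)
  · -- p = rv j : impossible
    exfalso
    rcases Nat.lt_or_ge 1 j with h | h
    · have := hrv_lt le_rfl h hj2
      omega
    · have hj : j = 1 := by omega
      subst hj
      omega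

end StP
namespace StP
variable {V : Type} [Fintype V] [DecidableEq V] (G : OuterStDigraph V)

lemma crossNum_empty : G.crossNum ∅ = 0 := by
  rw [crossNum_eq_sum]
  simp

lemma acyclic_empty : AcyclicRel (G.AugE ∅) := by
  intro v hv
  apply G.acyclic v
  refine Relation.TransGen.mono ?_ _ _ hv
  rintro a b (h | h)
  · exact h
  · simp at h

lemma isCompletion_empty_m (hm0 : mm G = 0) : G.IsCompletion ∅ := by
  have hR : G.rightV = [] := List.length_eq_zero_iff.mp hm0
  refine ⟨by simp, acyclic_empty G, ⟨lchain G, ?_, ?_, (lchain_chain G).imp (fun _ _ h => Or.inl h)⟩⟩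
  · have h := G.nodup
    rw [hR] at h
    exact h
  · intro v
    have h := G.cover v
    rw [hR] at h
    exact h

lemma isCompletion_empty_k (hk0 : kk G = 0) : G.IsCompletion ∅ := by
  have hL : G.leftV = [] := List.length_eq_zero_iff.mp hk0
  refine ⟨by simp, acyclic_empty G, ⟨rchain G, ?_, ?_, (rchain_chain G).imp (fun _ _ h => Or.inl h)⟩⟩
  · have hperm : (rchain G).Perm ((G.s :: G.leftV) ++ (G.t :: G.rightV)) := by
      rw [hL, rchain]
      exact List.Perm.cons _ (List.perm_append_singleton _ _)
    exact hperm.nodup_iff.mpr G.nodup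
  · intro v
    have hperm : (rchain G).Perm ((G.s :: G.leftV) ++ (G.t :: G.rightV)) := by
      rw [hL, rchain]
      exact List.Perm.cons _ (List.perm_append_singleton _ _)
    exact hperm.mem_iff.mpr (G.cover v)

end StP

open StP in
/-- Every st-polygon admits a crossing-optimal acyclic HP-completion set of size at most 2. -/
theorem stmt_6 {V : Type} [Fintype V] [DecidableEq V] (G : OuterStDigraph V)
    (hpoly : G.IsStPolygon) :
    ∃ P : Finset (V × V), G.IsOptimalCompletion P ∧ P.card ≤ 2 := by
  classical
  by_cases hk : kk G = 0
  · refine ⟨∅, ⟨isCompletion_empty_k G hk, fun Q _ => ?_⟩, by simp⟩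
    rw [crossNum_empty]
    exact Nat.zero_le _
  by_cases hm : mm G = 0
  · refine ⟨∅, ⟨isCompletion_empty_m G hm, fun Q _ => ?_⟩, by simp⟩
    rw [crossNum_empty]
    exact Nat.zero_le _
  have hk' : 1 ≤ kk G := by omega
  have hm' : 1 ≤ mm G := by omega
  set S : Set ℕ := {n | ∃ P : Finset (V × V), G.IsCompletion P ∧ P.card ≤ 2 ∧ G.crossNum P = n}
    with hS
  have hne : S.Nonempty :=
    ⟨_, ⟨PsetL G (kk G), isCompletion_L G hpoly hk' hm' le_rfl, card_PsetL G, rfl⟩⟩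
  obtain ⟨P0, hc0, hcard0, hEq0⟩ := Nat.sInf_mem hne
  refine ⟨P0, ⟨hc0, ?_⟩, hcard0⟩
  intro Q hQ
  obtain ⟨P', h1, h2, h3⟩ := exists_small G hpoly hk' hm' hQ
  have hle : sInf S ≤ G.crossNum P' := Nat.sInf_le ⟨P', h1, h2, rfl⟩
  omega
end
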